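/- arXiv:2506.19562 — 6 statements merged into one kernel-verified Lean document; each statement's English description precedes it below -/
import Mathlib

section
/- Let {r_n}, {R_n} ⊂ (0,∞) and let {θ_n}, {φ_n} ⊂ (−π/2, π/2) be sequences both converging to the same θ ∈ (−π/2, π/2). Then the limit lim_{n→∞} d_ℍ(r_n, R_n) exists (in [0,∞]) if and only if the limit lim_{n→∞} d_ℍ(r_n·e^{iθ_n}, R_n·e^{iφ_n}) exists (in [0,∞]). Moreover, lim_{n→∞} d_ℍ(r_n, R_n) = 0 if and only if lim_{n→∞} d_ℍ(r_n e^{iθ_n}, R_n e^{iφ_n}) = 0, and lim_{n→∞} d_ℍ(r_n, R_n) = +∞ if and only if lim_{n→∞} d_ℍ(r_n e^{iθ_n}, R_n e^{iφ_n}) = +∞. -/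
open Complex Filter Topology

/-- Pseudo-hyperbolic distance on the right half-plane ℍ = {Re z > 0}. -/
noncomputable def rhoH (z w : ℂ) : ℝ := ‖(z - w) / (z + (starRingEnd ℂ) w)‖

/-- Hyperbolic distance on the right half-plane. -/
noncomputable def dH (z w : ℂ) : ℝ := (1/2) * Real.log ((1 + rhoH z w) / (1 - rhoH z w))

/-- `p` is a hyperbolic projection of `z` onto the curve `γ : [0,∞) → ℍ`. -/
def IsProjH (γ : ℝ → ℂ) (z p : ℂ) : Prop :=
  (∃ t ≥ (0:ℝ), p = γ t) ∧ ∀ t ≥ (0:ℝ), dH z p ≤ dH z (γ t)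

/-- `f` is a hyperbolic holomorphic self-map of the right half-plane with
Denjoy–Wolff point ∞: it preserves ℍ, is holomorphic on ℍ, its iterates tend to ∞
uniformly on compact subsets of ℍ, and `f(z)/z → c` for some `c > 1` as `z → ∞`
within every sector `{|arg z| < φ}`, `φ ∈ (0, π/2)`. -/
def HyperbolicAtInf (f : ℂ → ℂ) : Prop :=
  (∀ z : ℂ, 0 < z.re → 0 < (f z).re) ∧
  DifferentiableOn ℂ f {z : ℂ | 0 < z.re} ∧
  (∀ K : Set ℂ, K ⊆ {z : ℂ | 0 < z.re} → IsCompact K →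
    ∀ M : ℝ, ∃ N : ℕ, ∀ n ≥ N, ∀ z ∈ K, M < ‖f^[n] z‖) ∧
  (∃ c : ℝ, 1 < c ∧ ∀ φ ∈ Set.Ioo (0:ℝ) (Real.pi/2), ∀ ε > (0:ℝ), ∃ R : ℝ,
    ∀ z : ℂ, 0 < z.re → |z.arg| < φ → R < ‖z‖ →
      ‖f z / z - (c:ℂ)‖ < ε)

/- ## Auxiliary machinery -/

noncomputable def hfun (x : ℝ) : ℝ := (1/2) * Real.log ((1+x)/(1-x))
noncomputable def gfun (y : ℝ) : ℝ := (Real.exp (2*y) - 1) / (Real.exp (2*y) + 1)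

lemma dH_eq_hfun (z w : ℂ) : dH z w = hfun (rhoH z w) := rfl

lemma gfun_hfun {x : ℝ} (hx : x ∈ Set.Ico (0:ℝ) 1) : gfun (hfun x) = x := by
  obtain ⟨h0, h1⟩ := hx
  have hx1 : (0:ℝ) < 1 - x := by linarith
  have hpos : 0 < (1+x)/(1-x) := by positivity
  have he : Real.exp (2 * hfun x) = (1+x)/(1-x) := by
    rw [hfun, show 2 * ((1/2) * Real.log ((1+x)/(1-x))) = Real.log ((1+x)/(1-x)) by ring]
    exact Real.exp_log hpos
  rw [gfun, he]
  have h1' : (1:ℝ) - x ≠ 0 := by linarith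
  field_simp
  ring

lemma gfun_cont : Continuous gfun := by
  apply Continuous.div (by continuity) (by continuity)
  intro y; positivity

lemma gfun_lt_one (y : ℝ) : gfun y < 1 := by
  rw [gfun, div_lt_one (by positivity)]; linarith

lemma gfun_tendsto_one : Tendsto gfun atTop (𝓝 1) := by
  have h : ∀ y : ℝ, gfun y = 1 - 2 / (Real.exp (2*y) + 1) := by
    intro y; rw [gfun]; field_simp; ring
  rw [show gfun = fun y : ℝ => 1 - 2 / (Real.exp (2*y) + 1) from funext h]
  have hexp : Tendsto (fun y : ℝ => Real.exp (2*y) + 1) atTop atTop := by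
    apply Filter.tendsto_atTop_add_const_right
    exact (Real.tendsto_exp_atTop).comp (tendsto_id.const_mul_atTop (by norm_num : (0:ℝ)<2))
  have h2 : Tendsto (fun y : ℝ => 2 / (Real.exp (2*y) + 1)) atTop (𝓝 0) := by
    exact (tendsto_const_nhds (x := (2:ℝ))).div_atTop hexp
  have := (tendsto_const_nhds (x := (1:ℝ))).sub h2
  simpa using this

lemma gfun_zero : gfun 0 = 0 := by simp [gfun]
lemma hfun_zero : hfun 0 = 0 := by simp [hfun]

lemma hfun_contAt {b : ℝ} (hb : b ∈ Set.Ico (0:ℝ) 1) : ContinuousAt hfun b := by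
  obtain ⟨h0, h1⟩ := hb
  have hb1 : (0:ℝ) < 1 - b := by linarith
  apply ContinuousAt.mul continuousAt_const
  apply (Real.continuousAt_log (by positivity)).comp
  exact ContinuousAt.div (by fun_prop) (by fun_prop) (by simp; linarith)

lemma hfun_seq_atTop {p : ℕ → ℝ} (hp : ∀ n, p n < 1) (h1 : Tendsto p atTop (𝓝 1)) :
    Tendsto (fun n => hfun (p n)) atTop atTop := by
  have hq : Tendsto (fun n => (1 + p n) * (1 - p n)⁻¹) atTop atTop := by
    apply Filter.Tendsto.pos_mul_atTop (show (0:ℝ) < 2 by norm_num)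
    · have := (tendsto_const_nhds (x:=(1:ℝ))).add h1
      norm_num at this; exact this
    · apply tendsto_inv_nhdsGT_zero.comp
      rw [tendsto_nhdsWithin_iff]
      constructor
      · have := (tendsto_const_nhds (x:=(1:ℝ))).sub h1
        norm_num at this; exact this
      · exact Filter.Eventually.of_forall fun n => by
          simp only [Set.mem_Ioi]; linarith [hp n]
  have := (Real.tendsto_log_atTop.comp hq).const_mul_atTop (show (0:ℝ) < 1/2 by norm_num)
  simpa [hfun, div_eq_mul_inv, Function.comp] using this

lemma mynormSq_sub (r R θ φ : ℝ) :
    Complex.normSq ((r:ℂ) * Complex.exp ((θ:ℂ)*I) - (R:ℂ) * Complex.exp ((φ:ℂ)*I))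
      = r^2 + R^2 - 2*r*R*Real.cos (θ - φ) := by
  simp only [Complex.normSq_apply, Complex.sub_re, Complex.sub_im, Complex.mul_re, Complex.mul_im,
    Complex.exp_ofReal_mul_I_re, Complex.exp_ofReal_mul_I_im, Complex.ofReal_re, Complex.ofReal_im,
    Real.cos_sub]
  nlinarith [Real.sin_sq_add_cos_sq θ, Real.sin_sq_add_cos_sq φ]

lemma mynormSq_addc (r R θ φ : ℝ) :
    Complex.normSq ((r:ℂ) * Complex.exp ((θ:ℂ)*I) + (starRingEnd ℂ) ((R:ℂ) * Complex.exp ((φ:ℂ)*I)))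
      = r^2 + R^2 + 2*r*R*Real.cos (θ + φ) := by
  have hc : (starRingEnd ℂ) ((R:ℂ) * Complex.exp ((φ:ℂ)*I)) = (R:ℂ) * Complex.exp (((-φ:ℝ):ℂ)*I) := by
    rw [map_mul, ← Complex.exp_conj, map_mul, Complex.conj_I, Complex.conj_ofReal]
    push_cast; ring_nf
    rw [Complex.conj_ofReal]; ring_nf
  rw [hc]
  simp only [Complex.normSq_apply, Complex.add_re, Complex.add_im, Complex.mul_re, Complex.mul_im,
    Complex.exp_ofReal_mul_I_re, Complex.exp_ofReal_mul_I_im, Complex.ofReal_re, Complex.ofReal_im,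
    Real.cos_add, Real.cos_neg, Real.sin_neg]
  nlinarith [Real.sin_sq_add_cos_sq θ, Real.sin_sq_add_cos_sq φ]

lemma rho_eq (r R θ φ : ℝ) (hr : 0 < r) (hR : 0 < R)
    (hcθ : 0 < Real.cos θ) (hcφ : 0 < Real.cos φ) :
    rhoH ((r:ℂ)*Complex.exp ((θ:ℂ)*I)) ((R:ℂ)*Complex.exp ((φ:ℂ)*I)) =
      Real.sqrt ((r/R + R/r - 2*Real.cos (θ-φ)) / (r/R + R/r + 2*Real.cos (θ+φ))) := by
  have hsum : Real.cos (θ-φ) + Real.cos (θ+φ) = 2 * Real.cos θ * Real.cos φ := by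
    rw [Real.cos_sub, Real.cos_add]; ring
  have hΔle : Real.cos (θ-φ) ≤ 1 := Real.cos_le_one _
  have hB : (0:ℝ) < r^2 + R^2 + 2*r*R*Real.cos (θ+φ) := by
    nlinarith [mul_pos hcθ hcφ, sq_nonneg (r-R), mul_pos hr hR]
  have hA : (0:ℝ) ≤ r^2 + R^2 - 2*r*R*Real.cos (θ-φ) := by
    nlinarith [sq_nonneg (r-R), mul_pos hr hR]
  have hB' : (0:ℝ) < r/R + R/r + 2*Real.cos (θ+φ) := by
    have heq : r/R + R/r + 2*Real.cos (θ+φ) = (r^2 + R^2 + 2*r*R*Real.cos (θ+φ))/(r*R) := by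
      field_simp
    rw [heq]; positivity
  rw [rhoH, norm_div, Complex.norm_def, Complex.norm_def, mynormSq_sub, mynormSq_addc,
    ← Real.sqrt_div hA]
  congr 1
  rw [div_eq_div_iff (ne_of_gt hB) (ne_of_gt hB')]
  field_simp
lemma aux_main (r R θs φs : ℕ → ℝ)
    (hr : ∀ n, 0 < r n) (hR : ∀ n, 0 < R n)
    (hθs : ∀ n, θs n ∈ Set.Ioo (-(Real.pi/2)) (Real.pi/2))
    (hφs : ∀ n, φs n ∈ Set.Ioo (-(Real.pi/2)) (Real.pi/2))
    (θ : ℝ) (hθ : θ ∈ Set.Ioo (-(Real.pi/2)) (Real.pi/2))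
    (hθlim : Tendsto θs atTop (𝓝 θ)) (hφlim : Tendsto φs atTop (𝓝 θ)) :
    ((∃ v : ℝ, 2 ≤ v ∧ Tendsto (fun n => r n / R n + R n / r n) atTop (𝓝 v)) ↔
      (∃ L : ℝ, Tendsto (fun n : ℕ =>
          dH ((r n : ℂ) * Complex.exp ((θs n : ℂ) * I))
             ((R n : ℂ) * Complex.exp ((φs n : ℂ) * I))) atTop (𝓝 L))) ∧
    (Tendsto (fun n => r n / R n + R n / r n) atTop (𝓝 2) ↔
      Tendsto (fun n : ℕ =>
          dH ((r n : ℂ) * Complex.exp ((θs n : ℂ) * I))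
             ((R n : ℂ) * Complex.exp ((φs n : ℂ) * I))) atTop (𝓝 0)) ∧
    (Tendsto (fun n => r n / R n + R n / r n) atTop atTop ↔
      Tendsto (fun n : ℕ =>
          dH ((r n : ℂ) * Complex.exp ((θs n : ℂ) * I))
             ((R n : ℂ) * Complex.exp ((φs n : ℂ) * I))) atTop atTop) := by
  set U : ℕ → ℝ := fun n => r n / R n + R n / r n with hUdef
  set Y : ℕ → ℝ := fun n =>
      dH ((r n : ℂ) * Complex.exp ((θs n : ℂ) * I))
         ((R n : ℂ) * Complex.exp ((φs n : ℂ) * I)) with hYdef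
  set Q : ℕ → ℝ := fun n =>
      (U n - 2*Real.cos (θs n - φs n)) / (U n + 2*Real.cos (θs n + φs n)) with hQdef
  set P : ℕ → ℝ := fun n => Real.sqrt (Q n) with hPdef
  -- pointwise facts
  have hcθ : ∀ n, 0 < Real.cos (θs n) := fun n => Real.cos_pos_of_mem_Ioo (hθs n)
  have hcφ : ∀ n, 0 < Real.cos (φs n) := fun n => Real.cos_pos_of_mem_Ioo (hφs n)
  have hu2 : ∀ n, 2 ≤ U n := by
    intro n
    have h1 := hr n; have h2 := hR n
    rw [hUdef]
    simp only
    rw [div_add_div _ _ (ne_of_gt h2) (ne_of_gt h1), le_div_iff₀ (by positivity)]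
    nlinarith [sq_nonneg (r n - R n)]
  have hsum : ∀ n, Real.cos (θs n - φs n) + Real.cos (θs n + φs n)
      = 2*Real.cos (θs n)*Real.cos (φs n) := fun n => by
    rw [Real.cos_sub, Real.cos_add]; ring
  have hΔle : ∀ n, Real.cos (θs n - φs n) ≤ 1 := fun n => Real.cos_le_one _
  have hD : ∀ n, 0 < U n + 2*Real.cos (θs n + φs n) := fun n => by
    nlinarith [mul_pos (hcθ n) (hcφ n), hu2 n, hΔle n, hsum n]
  have hN : ∀ n, 0 ≤ U n - 2*Real.cos (θs n - φs n) := fun n => by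
    linarith [hu2 n, hΔle n]
  have hQ0 : ∀ n, 0 ≤ Q n := fun n => div_nonneg (hN n) (hD n).le
  have hQ1 : ∀ n, Q n < 1 := fun n => by
    rw [hQdef]; simp only
    rw [div_lt_one (hD n)]
    nlinarith [mul_pos (hcθ n) (hcφ n), hsum n]
  have hP0 : ∀ n, 0 ≤ P n := fun n => Real.sqrt_nonneg _
  have hP1 : ∀ n, P n < 1 := fun n => by
    rw [hPdef]; simp only
    calc Real.sqrt (Q n) < Real.sqrt 1 := Real.sqrt_lt_sqrt (hQ0 n) (hQ1 n)
    _ = 1 := Real.sqrt_one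
  have hPsq : ∀ n, P n ^ 2 = Q n := fun n => Real.sq_sqrt (hQ0 n)
  have hYP : ∀ n, Y n = hfun (P n) := fun n => by
    rw [hYdef]; simp only
    rw [dH_eq_hfun, rho_eq (r n) (R n) (θs n) (φs n) (hr n) (hR n) (hcθ n) (hcφ n)]
  have hgY : ∀ n, gfun (Y n) = P n := fun n => by
    rw [hYP n]; exact gfun_hfun ⟨hP0 n, hP1 n⟩
  have h1mQ : ∀ n, 1 - Q n
      = 4*(Real.cos (θs n)*Real.cos (φs n)) / (U n + 2*Real.cos (θs n + φs n)) := fun n => by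
    rw [hQdef]; simp only
    rw [eq_div_iff (ne_of_gt (hD n)), sub_mul, div_mul_cancel₀ _ (ne_of_gt (hD n))]
    linarith [hsum n]
  have hDeq : ∀ n, U n + 2*Real.cos (θs n + φs n)
      = 4*(Real.cos (θs n)*Real.cos (φs n)) / (1 - Q n) := fun n => by
    rw [eq_div_iff (ne_of_gt (sub_pos.2 (hQ1 n))), h1mQ n, mul_comm,
      div_mul_cancel₀ _ (ne_of_gt (hD n))]
  -- limit facts
  have hcθpos : 0 < Real.cos θ := Real.cos_pos_of_mem_Ioo hθ
  have hc2θ : -1 < Real.cos (2*θ) := by rw [Real.cos_two_mul]; nlinarith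
  have hΔlim : Tendsto (fun n => Real.cos (θs n - φs n)) atTop (𝓝 1) := by
    have h0 : Tendsto (fun n => θs n - φs n) atTop (𝓝 0) := by
      have := hθlim.sub hφlim; simpa using this
    have := (Real.continuous_cos.tendsto 0).comp h0
    simpa [Function.comp_def] using this
  have hSumlim : Tendsto (fun n => Real.cos (θs n + φs n)) atTop (𝓝 (Real.cos (2*θ))) := by
    have h0 : Tendsto (fun n => θs n + φs n) atTop (𝓝 (2*θ)) := by
      have := hθlim.add hφlim; rw [two_mul]; exact this
    exact (Real.continuous_cos.tendsto _).comp h0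
  have hcclim : Tendsto (fun n => Real.cos (θs n) * Real.cos (φs n)) atTop (𝓝 (Real.cos θ ^ 2)) := by
    have := ((Real.continuous_cos.tendsto θ).comp hθlim).mul ((Real.continuous_cos.tendsto θ).comp hφlim)
    simpa [Function.comp, sq] using this
  -- key forward: U tendsto v implies Y tendsto explicit value
  have key1 : ∀ v : ℝ, 2 ≤ v → Tendsto U atTop (𝓝 v) →
      Tendsto Y atTop (𝓝 (hfun (Real.sqrt ((v-2)/(v+2*Real.cos (2*θ)))))) := by
    intro v hv hUv
    have hden : 0 < v + 2*Real.cos (2*θ) := by linarith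
    have hQlim : Tendsto Q atTop (𝓝 ((v-2)/(v+2*Real.cos (2*θ)))) := by
      have hnum : Tendsto (fun n => U n - 2*Real.cos (θs n - φs n)) atTop (𝓝 (v - 2)) := by
        have h := hUv.sub (hΔlim.const_mul 2)
        norm_num at h; exact h
      have hdenl : Tendsto (fun n => U n + 2*Real.cos (θs n + φs n)) atTop
          (𝓝 (v + 2*Real.cos (2*θ))) := by
        have := hUv.add (hSumlim.const_mul 2)
        convert this using 2 <;> ring
      exact hnum.div hdenl (ne_of_gt hden)
    set m := (v-2)/(v+2*Real.cos (2*θ)) with hm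
    have hm0 : 0 ≤ m := div_nonneg (by linarith) hden.le
    have hm1 : m < 1 := by rw [hm, div_lt_one hden]; linarith
    have hPlim : Tendsto P atTop (𝓝 (Real.sqrt m)) :=
      (Real.continuous_sqrt.tendsto m).comp hQlim
    have hsm : Real.sqrt m ∈ Set.Ico (0:ℝ) 1 := by
      refine ⟨Real.sqrt_nonneg _, ?_⟩
      calc Real.sqrt m < Real.sqrt 1 := Real.sqrt_lt_sqrt hm0 hm1
      _ = 1 := Real.sqrt_one
    rw [show Y = fun n => hfun (P n) from funext hYP]
    exact (hfun_contAt hsm).tendsto.comp hPlim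
  -- key backward: Y tendsto L implies U tendsto explicit value
  have key2 : ∀ L : ℝ, Tendsto Y atTop (𝓝 L) →
      Tendsto U atTop (𝓝 (4*Real.cos θ^2/(1 - gfun L^2) - 2*Real.cos (2*θ))) := by
    intro L hY
    have hPlim : Tendsto P atTop (𝓝 (gfun L)) := by
      have h2 : Tendsto (fun n => gfun (Y n)) atTop (𝓝 (gfun L)) := (gfun_cont.tendsto L).comp hY
      rwa [show (fun n => gfun (Y n)) = P from funext hgY] at h2
    have hb1 : gfun L < 1 := gfun_lt_one L
    have hb0 : 0 ≤ gfun L := ge_of_tendsto' hPlim hP0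
    have hQlim : Tendsto Q atTop (𝓝 (gfun L ^ 2)) := by
      have h2 : Tendsto (fun n => P n ^ 2) atTop (𝓝 (gfun L ^ 2)) := hPlim.pow 2
      rwa [show (fun n => P n ^ 2) = Q from funext hPsq] at h2
    have hb2 : gfun L ^ 2 < 1 := by nlinarith
    have hDlim : Tendsto (fun n => U n + 2*Real.cos (θs n + φs n)) atTop
        (𝓝 (4*Real.cos θ^2/(1 - gfun L^2))) := by
      rw [show (fun n => U n + 2*Real.cos (θs n + φs n))
          = fun n => 4*(Real.cos (θs n)*Real.cos (φs n)) / (1 - Q n) from funext hDeq]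
      exact (hcclim.const_mul 4).div (tendsto_const_nhds.sub hQlim) (ne_of_gt (by linarith : (0:ℝ) < 1 - gfun L^2))
    have := hDlim.sub (hSumlim.const_mul 2)
    rw [show (fun n => (U n + 2*Real.cos (θs n + φs n)) - 2*Real.cos (θs n + φs n)) = U from
      funext fun n => by ring] at this
    exact this
  -- atTop transfers
  have keytop1 : Tendsto U atTop atTop → Tendsto Y atTop atTop := by
    intro hUtop
    have hDtop : Tendsto (fun n => U n + 2*Real.cos (θs n + φs n)) atTop atTop := by
      apply tendsto_atTop_mono (fun n => ?_) (tendsto_atTop_add_const_right atTop (-2) hUtop)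
      have := Real.neg_one_le_cos (θs n + φs n)
      linarith
    have hQtop : Tendsto Q atTop (𝓝 1) := by
      have h4cc : Tendsto (fun n => 4*(Real.cos (θs n)*Real.cos (φs n))) atTop
          (𝓝 (4*Real.cos θ^2)) := hcclim.const_mul 4
      have hdiv : Tendsto (fun n => 4*(Real.cos (θs n)*Real.cos (φs n))
          / (U n + 2*Real.cos (θs n + φs n))) atTop (𝓝 0) := h4cc.div_atTop hDtop
      have h2 : Tendsto (fun n => 1 - (1 - Q n)) atTop (𝓝 (1 - 0)) := by
        apply Tendsto.sub tendsto_const_nhds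
        rw [show (fun n => 1 - Q n) = fun n => 4*(Real.cos (θs n)*Real.cos (φs n))
          / (U n + 2*Real.cos (θs n + φs n)) from funext h1mQ]
        exact hdiv
      simpa using h2
    have hPtop : Tendsto P atTop (𝓝 1) := by
      have h2 : Tendsto (fun n => Real.sqrt (Q n)) atTop (𝓝 (Real.sqrt 1)) :=
        (Real.continuous_sqrt.tendsto 1).comp hQtop
      rw [Real.sqrt_one] at h2
      exact h2
    rw [show Y = fun n => hfun (P n) from funext hYP]
    exact hfun_seq_atTop hP1 hPtop
  have keytop2 : Tendsto Y atTop atTop → Tendsto U atTop atTop := by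
    intro hYtop
    have hPtop : Tendsto P atTop (𝓝 1) := by
      have h2 : Tendsto (fun n => gfun (Y n)) atTop (𝓝 1) := gfun_tendsto_one.comp hYtop
      rwa [show (fun n => gfun (Y n)) = P from funext hgY] at h2
    have hQtop : Tendsto Q atTop (𝓝 1) := by
      have h2 : Tendsto (fun n => P n ^ 2) atTop (𝓝 1) := by simpa using hPtop.pow 2
      rwa [show (fun n => P n ^ 2) = Q from funext hPsq] at h2
    have hDtop : Tendsto (fun n => U n + 2*Real.cos (θs n + φs n)) atTop atTop := by
      rw [show (fun n => U n + 2*Real.cos (θs n + φs n))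
          = fun n => 4*(Real.cos (θs n)*Real.cos (φs n)) * (1 - Q n)⁻¹ from
        funext fun n => by rw [hDeq n, div_eq_mul_inv]]
      apply Filter.Tendsto.pos_mul_atTop (show (0:ℝ) < 4*Real.cos θ^2 by positivity)
        (hcclim.const_mul 4)
      apply tendsto_inv_nhdsGT_zero.comp
      rw [tendsto_nhdsWithin_iff]
      refine ⟨by simpa using (tendsto_const_nhds (x:=(1:ℝ))).sub hQtop,
        Filter.Eventually.of_forall fun n => ?_⟩
      simp only [Set.mem_Ioi]; linarith [hQ1 n]
    apply tendsto_atTop_mono (fun n => ?_) (tendsto_atTop_add_const_right atTop (-2) hDtop)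
    have := Real.cos_le_one (θs n + φs n)
    linarith
  refine ⟨⟨?_, ?_⟩, ⟨?_, ?_⟩, keytop1, keytop2⟩
  · rintro ⟨v, hv, hUv⟩
    exact ⟨_, key1 v hv hUv⟩
  · rintro ⟨L, hL⟩
    exact ⟨_, ge_of_tendsto' (key2 L hL) hu2, key2 L hL⟩
  · intro hU2
    have h := key1 2 le_rfl hU2
    norm_num [hfun_zero] at h
    exact h
  · intro hY0
    have h := key2 0 hY0
    have he : (4*Real.cos θ^2/(1 - gfun 0^2) - 2*Real.cos (2*θ)) = 2 := by
      rw [gfun_zero, Real.cos_two_mul]; ring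
    rwa [he] at h

/-- for positive sequences r_n, R_n and angles θ_n, φ_n → θ ∈ (−π/2, π/2),
the limit of d_ℍ(r_n, R_n) exists (in [0,∞]) iff the limit of
d_ℍ(r_n e^{iθ_n}, R_n e^{iφ_n}) exists (in [0,∞]); moreover one limit is 0 (resp. +∞)
iff the other is. -/
theorem stmt10 (r R θs φs : ℕ → ℝ)
    (hr : ∀ n, 0 < r n) (hR : ∀ n, 0 < R n)
    (hθs : ∀ n, θs n ∈ Set.Ioo (-(Real.pi/2)) (Real.pi/2))
    (hφs : ∀ n, φs n ∈ Set.Ioo (-(Real.pi/2)) (Real.pi/2))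
    (θ : ℝ) (hθ : θ ∈ Set.Ioo (-(Real.pi/2)) (Real.pi/2))
    (hθlim : Tendsto θs atTop (𝓝 θ)) (hφlim : Tendsto φs atTop (𝓝 θ)) :
    (((∃ L : ℝ, Tendsto (fun n : ℕ => dH ((r n : ℂ)) ((R n : ℂ))) atTop (𝓝 L)) ∨
        Tendsto (fun n : ℕ => dH ((r n : ℂ)) ((R n : ℂ))) atTop atTop) ↔
      ((∃ L : ℝ, Tendsto (fun n : ℕ =>
            dH ((r n : ℂ) * Complex.exp ((θs n : ℂ) * I))
               ((R n : ℂ) * Complex.exp ((φs n : ℂ) * I))) atTop (𝓝 L)) ∨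
        Tendsto (fun n : ℕ =>
            dH ((r n : ℂ) * Complex.exp ((θs n : ℂ) * I))
               ((R n : ℂ) * Complex.exp ((φs n : ℂ) * I))) atTop atTop)) ∧
    (Tendsto (fun n : ℕ => dH ((r n : ℂ)) ((R n : ℂ))) atTop (𝓝 0) ↔
      Tendsto (fun n : ℕ =>
          dH ((r n : ℂ) * Complex.exp ((θs n : ℂ) * I))
             ((R n : ℂ) * Complex.exp ((φs n : ℂ) * I))) atTop (𝓝 0)) ∧
    (Tendsto (fun n : ℕ => dH ((r n : ℂ)) ((R n : ℂ))) atTop atTop ↔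
      Tendsto (fun n : ℕ =>
          dH ((r n : ℂ) * Complex.exp ((θs n : ℂ) * I))
             ((R n : ℂ) * Complex.exp ((φs n : ℂ) * I))) atTop atTop) := by
  have hπ := Real.pi_pos
  have h0mem : (0:ℝ) ∈ Set.Ioo (-(Real.pi/2)) (Real.pi/2) := ⟨by linarith, by linarith⟩
  have hzfun : (fun n : ℕ =>
      dH ((r n : ℂ) * Complex.exp ((((fun _ : ℕ => (0:ℝ)) n) : ℂ) * I))
         ((R n : ℂ) * Complex.exp ((((fun _ : ℕ => (0:ℝ)) n) : ℂ) * I)))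
      = fun n : ℕ => dH ((r n : ℂ)) ((R n : ℂ)) := by
    funext n; norm_num
  obtain ⟨F1, Z1, T1⟩ := aux_main r R (fun _ => 0) (fun _ => 0) hr hR
    (fun _ => h0mem) (fun _ => h0mem) 0 h0mem tendsto_const_nhds tendsto_const_nhds
  rw [hzfun] at F1 Z1 T1
  obtain ⟨F2, Z2, T2⟩ := aux_main r R θs φs hr hR hθs hφs θ hθ hθlim hφlim
  exact ⟨or_congr (F1.symm.trans F2) (T1.symm.trans T2), Z1.symm.trans Z2, T1.symm.trans T2⟩
end

section
/- Let {r_n} ⊂ (0,∞) be a sequence with r_n → +∞ and let θ ∈ (−π/2, π/2). Then for any r₀ > 0, lim_{n→∞} ( d_ℍ(r₀·e^{iθ}, r_n·e^{iθ}) − d_ℍ(r₀, r_n) ) = −log(cos θ), and this limit belongs to [0, +∞). -/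
open Complex Filter Topology

lemma dH_real (r₀ s : ℝ) (h0 : 0 < r₀) (hs : r₀ < s) :
    dH (r₀:ℂ) (s:ℂ) = (1/2) * Real.log (s / r₀) := by
  have hρ : rhoH (r₀:ℂ) (s:ℂ) = (s - r₀)/(s + r₀) := by
    rw [rhoH, Complex.conj_ofReal]
    rw [show ((r₀:ℂ) - s)/((r₀:ℂ) + s) = (((r₀ - s)/(r₀ + s) : ℝ) : ℂ) by push_cast; ring]
    rw [Complex.norm_real, Real.norm_eq_abs, abs_div, abs_of_neg (by linarith), abs_of_pos (by linarith)]
    ring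
  have hsum : s + r₀ ≠ 0 := by nlinarith
  rw [dH, hρ, show (1 + (s-r₀)/(s+r₀)) / (1 - (s-r₀)/(s+r₀)) = s / r₀ from by
    field_simp [h0.ne']; ring]

lemma diff_eq (θ r₀ s : ℝ) (hθc : 0 < Real.cos θ) (h0 : 0 < r₀) (hs : r₀ < s) :
    dH ((r₀:ℂ) * Complex.exp ((θ:ℂ)*I)) ((s:ℂ) * Complex.exp ((θ:ℂ)*I)) - dH (r₀:ℂ) (s:ℂ)
      = Real.log ((Real.sqrt (s^2 + 2*r₀*(Real.cos θ^2 - Real.sin θ^2)*s + r₀^2) + s - r₀)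
          / (2 * s * Real.cos θ)) := by
  have hpyth := Real.sin_sq_add_cos_sq θ
  have hs0 : 0 < s := lt_trans h0 hs
  have hQalt : s^2 + 2*r₀*(Real.cos θ^2 - Real.sin θ^2)*s + r₀^2
      = (s - r₀)^2 + 4*r₀*s*Real.cos θ^2 := by linear_combination (-2)*r₀*s*hpyth
  have hQpos : 0 < s^2 + 2*r₀*(Real.cos θ^2 - Real.sin θ^2)*s + r₀^2 := by
    rw [hQalt]; nlinarith [sq_nonneg (s - r₀), mul_pos (mul_pos h0 hs0) (pow_pos hθc 2)]
  set A := Real.sqrt (s^2 + 2*r₀*(Real.cos θ^2 - Real.sin θ^2)*s + r₀^2) with hA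
  have hApos : 0 < A := Real.sqrt_pos.mpr hQpos
  have hA2 : A^2 = (s - r₀)^2 + 4*r₀*s*Real.cos θ^2 := by
    rw [hA, Real.sq_sqrt hQpos.le]; exact hQalt
  have hAgt : s - r₀ < A := by
    nlinarith [mul_pos (mul_pos h0 hs0) (pow_pos hθc 2)]
  have habs : ‖(r₀:ℂ) * Complex.exp ((θ:ℂ)*I) + (starRingEnd ℂ) ((s:ℂ) * Complex.exp ((θ:ℂ)*I))‖ = A := by
    rw [Complex.norm_def, hA]
    congr 1
    simp [Complex.normSq_apply, Complex.add_re, Complex.add_im, Complex.mul_re, Complex.mul_im,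
      Complex.exp_ofReal_mul_I_re, Complex.exp_ofReal_mul_I_im, map_mul, Complex.conj_ofReal]
    linear_combination (r₀^2 + s^2)*hpyth
  have hnum : ‖(r₀:ℂ) * Complex.exp ((θ:ℂ)*I) - (s:ℂ) * Complex.exp ((θ:ℂ)*I)‖ = s - r₀ := by
    rw [show (r₀:ℂ) * Complex.exp ((θ:ℂ)*I) - (s:ℂ) * Complex.exp ((θ:ℂ)*I)
        = ((r₀ - s : ℝ):ℂ) * Complex.exp ((θ:ℂ)*I) by push_cast; ring]
    rw [norm_mul, Complex.norm_real, Complex.norm_exp]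
    simp [abs_of_neg (show r₀ - s < 0 by linarith)]
  have hρ : rhoH ((r₀:ℂ) * Complex.exp ((θ:ℂ)*I)) ((s:ℂ) * Complex.exp ((θ:ℂ)*I)) = (s - r₀)/A := by
    rw [rhoH, norm_div, hnum, habs]
  have hAne : A ≠ 0 := hApos.ne'
  have hden : A - (s - r₀) ≠ 0 := by nlinarith
  rw [dH, hρ, dH_real r₀ s h0 hs,
    show (1 + (s-r₀)/A) / (1 - (s-r₀)/A) = (A + (s - r₀)) / (A - (s - r₀)) from by
      field_simp]
  set u := (A + s - r₀)/(2 * s * Real.cos θ) with hu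
  have h2sc : 0 < 2 * s * Real.cos θ := by positivity
  have hupos : 0 < u := div_pos (by linarith) h2sc
  have hprod : (A - (s - r₀)) * (A + (s - r₀)) = 4*r₀*s*Real.cos θ^2 := by
    linear_combination hA2
  have key : (A + (s - r₀)) / (A - (s - r₀)) / (s / r₀) = u^2 := by
    rw [hu, div_pow]
    field_simp
    ring_nf
    linear_combination (-(A+s-r₀))*hprod
  -- conclude
  have hb : (0:ℝ) < s / r₀ := div_pos hs0 h0
  have ha : (0:ℝ) < (A + (s - r₀)) / (A - (s - r₀)) := div_pos (by linarith) (by linarith)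
  have hfin : Real.log ((A + (s - r₀))/(A - (s - r₀))) - Real.log (s/r₀) = 2 * Real.log u := by
    rw [← Real.log_div ha.ne' hb.ne', key, Real.log_pow]
    push_cast; ring
  linarith [hfin]

lemma limit_lemma (θ r₀ : ℝ) (hθc : 0 < Real.cos θ) (h0 : 0 < r₀) :
    Tendsto (fun s : ℝ => Real.log ((Real.sqrt (s^2 + 2*r₀*(Real.cos θ^2 - Real.sin θ^2)*s + r₀^2) + s - r₀)
          / (2 * s * Real.cos θ))) atTop (𝓝 (-Real.log (Real.cos θ))) := by
  set c2 := Real.cos θ^2 - Real.sin θ^2 with hc2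
  have hH : Continuous (fun u : ℝ => (Real.sqrt (1 + 2*r₀*c2*u + r₀^2*u^2) + 1 - r₀*u)/(2*Real.cos θ)) := by
    fun_prop
  have h1 : Tendsto (fun s : ℝ => (Real.sqrt (1 + 2*r₀*c2*s⁻¹ + r₀^2*(s⁻¹)^2) + 1 - r₀*s⁻¹)/(2*Real.cos θ))
      atTop (𝓝 ((Real.sqrt (1 + 2*r₀*c2*0 + r₀^2*0^2) + 1 - r₀*0)/(2*Real.cos θ))) :=
    (hH.tendsto 0).comp tendsto_inv_atTop_zero
  have hval : (Real.sqrt (1 + 2*r₀*c2*0 + r₀^2*0^2) + 1 - r₀*0)/(2*Real.cos θ) = (Real.cos θ)⁻¹ := by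
    norm_num
    field_simp
  rw [hval] at h1
  have h2 : Tendsto (fun s : ℝ => Real.log ((Real.sqrt (1 + 2*r₀*c2*s⁻¹ + r₀^2*(s⁻¹)^2) + 1 - r₀*s⁻¹)/(2*Real.cos θ)))
      atTop (𝓝 (Real.log (Real.cos θ)⁻¹)) :=
    (Real.continuousAt_log (by positivity)).tendsto.comp h1
  rw [Real.log_inv] at h2
  apply h2.congr'
  filter_upwards [eventually_gt_atTop 0] with s hs0
  congr 1
  have hsq : s^2 + 2*r₀*c2*s + r₀^2 = s^2 * (1 + 2*r₀*c2*s⁻¹ + r₀^2*(s⁻¹)^2) := by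
    field_simp
  have hsqrt : Real.sqrt (s^2 + 2*r₀*c2*s + r₀^2) = s * Real.sqrt (1 + 2*r₀*c2*s⁻¹ + r₀^2*(s⁻¹)^2) := by
    rw [hsq, Real.sqrt_mul (sq_nonneg s), Real.sqrt_sq hs0.le]
  rw [hsqrt]
  field_simp

/-- for r_n → ∞ and θ ∈ (−π/2, π/2),
d_ℍ(r₀e^{iθ}, r_n e^{iθ}) − d_ℍ(r₀, r_n) → −log(cos θ) ∈ [0, ∞). -/
theorem stmt11 (r : ℕ → ℝ) (hr : ∀ n, 0 < r n) (hrinf : Tendsto r atTop atTop)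
    (θ : ℝ) (hθ : θ ∈ Set.Ioo (-(Real.pi/2)) (Real.pi/2))
    (r₀ : ℝ) (hr₀ : 0 < r₀) :
    Tendsto (fun n : ℕ =>
        dH ((r₀ : ℂ) * Complex.exp ((θ : ℂ) * I)) ((r n : ℂ) * Complex.exp ((θ : ℂ) * I))
          - dH ((r₀ : ℂ)) ((r n : ℂ))) atTop (𝓝 (-Real.log (Real.cos θ))) ∧
    0 ≤ -Real.log (Real.cos θ) := by
  have hθc : 0 < Real.cos θ := Real.cos_pos_of_mem_Ioo hθ
  constructor
  · have hG : Tendsto (fun s : ℝ =>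
        dH ((r₀ : ℂ) * Complex.exp ((θ : ℂ) * I)) ((s : ℂ) * Complex.exp ((θ : ℂ) * I))
          - dH ((r₀ : ℂ)) ((s : ℂ))) atTop (𝓝 (-Real.log (Real.cos θ))) := by
      apply (limit_lemma θ r₀ hθc hr₀).congr'
      filter_upwards [eventually_gt_atTop r₀] with s hs
      exact (diff_eq θ r₀ s hθc hr₀ hs).symm
    exact hG.comp hrinf
  · simp only [neg_nonneg]
    exact Real.log_nonpos hθc.le (Real.cos_le_one θ)
end

section
/- Let {p_n} ⊂ ℍ be a sequence with |p_n| → ∞ and {r_n} ⊂ (0,1) a sequence with r_n → 1. If (Re p_n)/((1 − r_n²)·|1 + p_n|²) → λ for some λ ∈ (0, +∞), then the open half-plane {z ∈ ℂ : Re z > 1/(4λ)} is contained in liminf_{n→∞} Δ_ℍ(p_n, r_n); that is, for every z with Re z > 1/(4λ) there exists N such that z ∈ Δ_ℍ(p_n, r_n) for all n ≥ N. -/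
open Complex Filter Topology

/-- The pseudo-hyperbolic disc of ℍ with centre `z` and radius `r`. -/
def DeltaH (z : ℂ) (r : ℝ) : Set ℂ := {w : ℂ | 0 < w.re ∧ rhoH w z < r}

/-- disc convergence lemma: if Re p_n / ((1 − r_n²)|1 + p_n|²) → λ > 0,
then the half-plane {Re z > 1/(4λ)} is contained in liminf Δ_ℍ(p_n, r_n). -/
theorem stmt12 (p : ℕ → ℂ) (hp : ∀ n, 0 < (p n).re)
    (hpinf : Tendsto (fun n : ℕ => ‖p n‖) atTop atTop)
    (r : ℕ → ℝ) (hr : ∀ n, r n ∈ Set.Ioo (0:ℝ) 1)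
    (hrlim : Tendsto r atTop (𝓝 1))
    (lam : ℝ) (hlam : 0 < lam)
    (hlim : Tendsto (fun n : ℕ =>
        (p n).re / ((1 - (r n)^2) * (‖1 + p n‖)^2)) atTop (𝓝 lam)) :
    ∀ z : ℂ, 1/(4*lam) < z.re → ∃ N : ℕ, ∀ n ≥ N, z ∈ DeltaH (p n) (r n) := by
  intro z hz
  have hz0 : 0 < z.re := lt_trans (by positivity) hz
  -- key identity
  have key : ∀ q : ℂ, (‖z - q‖)^2
      = (‖z + (starRingEnd ℂ) q‖)^2 - 4 * z.re * q.re := by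
    intro q
    simp only [Complex.sq_norm, Complex.normSq_apply, Complex.sub_re, Complex.sub_im,
      Complex.add_re, Complex.add_im, Complex.conj_re, Complex.conj_im]
    ring
  have hconjabs : ∀ n, ‖1 + (starRingEnd ℂ) (p n)‖ = ‖1 + p n‖ := by
    intro n
    rw [show (1 + (starRingEnd ℂ) (p n)) = (starRingEnd ℂ) (1 + p n) by simp, Complex.norm_conj]
  -- |1 + p n| → ∞
  have h0 : Tendsto (fun n => ‖1 + p n‖) atTop atTop := by
    refine tendsto_atTop_mono' atTop (Eventually.of_forall fun n => ?_)
      (tendsto_atTop_add_const_right atTop (-1) hpinf)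
    have h1 : ‖p n‖ ≤ ‖1 + p n‖ + 1 := by
      calc ‖p n‖ = ‖(1 + p n) + (-1)‖ := by ring_nf
        _ ≤ ‖1 + p n‖ + ‖-1‖ := norm_add_le _ _
        _ = ‖1 + p n‖ + 1 := by simp
    linarith
  have htail : Tendsto (fun n => (z - 1) / (1 + (starRingEnd ℂ) (p n))) atTop (𝓝 0) := by
    rw [tendsto_zero_iff_norm_tendsto_zero]
    have := Tendsto.div_atTop (f := fun _ : ℕ => ‖z - 1‖)
      (tendsto_const_nhds) h0
    refine this.congr fun n => ?_
    rw [norm_div]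
    simp [hconjabs n]
  -- eventually 1 + conj (p n) ≠ 0
  have hne : ∀ᶠ n in atTop, (1 : ℂ) + (starRingEnd ℂ) (p n) ≠ 0 := by
    filter_upwards [h0.eventually_gt_atTop 0] with n hn
    intro h
    rw [← hconjabs n] at hn
    simp [h] at hn
  have hratio : Tendsto (fun n => (z + (starRingEnd ℂ) (p n)) / (1 + (starRingEnd ℂ) (p n)))
      atTop (𝓝 1) := by
    have : Tendsto (fun n => 1 + (z - 1) / (1 + (starRingEnd ℂ) (p n))) atTop (𝓝 (1 + 0)) :=
      tendsto_const_nhds.add htail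
    rw [add_zero] at this
    refine Tendsto.congr' ?_ this
    filter_upwards [hne] with n hn
    field_simp
    ring
  have habs2 : Tendsto (fun n =>
      (‖z + (starRingEnd ℂ) (p n)‖)^2 / (‖1 + p n‖)^2)
      atTop (𝓝 1) := by
    have h1 : Tendsto (fun n =>
        ‖(z + (starRingEnd ℂ) (p n)) / (1 + (starRingEnd ℂ) (p n))‖)
        atTop (𝓝 1) := by
      have := hratio.norm
      simpa using this
    have h2 := h1.pow 2
    rw [one_pow] at h2
    refine h2.congr fun n => ?_
    rw [norm_div, div_pow, hconjabs n]
  have hqinv : Tendsto (fun n =>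
      ((p n).re / ((1 - (r n)^2) * (‖1 + p n‖)^2))⁻¹) atTop (𝓝 lam⁻¹) :=
    hlim.inv₀ hlam.ne'
  have ha : Tendsto (fun n =>
      ((p n).re / ((1 - (r n)^2) * (‖1 + p n‖)^2))⁻¹ *
      ((‖z + (starRingEnd ℂ) (p n)‖)^2 / (‖1 + p n‖)^2))
      atTop (𝓝 (lam⁻¹ * 1)) := hqinv.mul habs2
  rw [mul_one] at ha
  have hlt : lam⁻¹ < 4 * z.re := by
    have h4 : (0:ℝ) < 4 * lam := by positivity
    rw [div_lt_iff₀ h4] at hz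
    rw [inv_eq_one_div, div_lt_iff₀ hlam]
    nlinarith
  have hev : ∀ᶠ n in atTop,
      (1 - (r n)^2) * (‖z + (starRingEnd ℂ) (p n)‖)^2 < 4 * z.re * (p n).re := by
    filter_upwards [ha.eventually_lt_const hlt, h0.eventually_gt_atTop 0] with n hn h0n
    have hpn : 0 < (p n).re := hp n
    have hrn2 : 0 < 1 - (r n)^2 := by
      have := (hr n).1; have := (hr n).2; nlinarith
    have heq : ((p n).re / ((1 - (r n)^2) * (‖1 + p n‖)^2))⁻¹ *
        ((‖z + (starRingEnd ℂ) (p n)‖)^2 / (‖1 + p n‖)^2)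
        = (1 - (r n)^2) * (‖z + (starRingEnd ℂ) (p n)‖)^2 / (p n).re := by
      field_simp
    rw [heq, div_lt_iff₀ hpn] at hn
    nlinarith
  rw [eventually_atTop] at hev
  obtain ⟨N, hN⟩ := hev
  refine ⟨N, fun n hn => ?_⟩
  have h1 := hN n hn
  have hpn : 0 < (p n).re := hp n
  have hsum : (0:ℂ) ≠ z + (starRingEnd ℂ) (p n) := by
    intro h
    have : (z + (starRingEnd ℂ) (p n)).re = 0 := by rw [← h]; simp
    rw [Complex.add_re, Complex.conj_re] at this
    linarith
  have habs : 0 < ‖z + (starRingEnd ℂ) (p n)‖ :=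
    norm_pos_iff.mpr (Ne.symm hsum)
  refine ⟨hz0, ?_⟩
  unfold rhoH
  rw [norm_div, div_lt_iff₀ habs]
  have hrn : 0 < r n := (hr n).1
  refine lt_of_pow_lt_pow_left₀ 2 (by positivity) ?_
  rw [mul_pow, key (p n)]
  nlinarith
end

section
/- Fix θ ∈ (−π/2, π/2), r₀ > 0 and φ ∈ (−π/2, π/2). The function r ↦ d_ℍ(r·e^{iφ}, r₀·e^{iθ}) on (0,∞) attains its minimum at r = r₀, is strictly decreasing on (0, r₀), and is strictly increasing on (r₀, ∞). -/
open Complex Filter Topology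

lemma rho_sq (θ r₀ φ r : ℝ) :
    (rhoH ((r:ℂ) * Complex.exp ((φ:ℂ) * I)) ((r₀:ℂ) * Complex.exp ((θ:ℂ) * I)))^2
    = (r^2 + r₀^2 - 2*r*r₀*Real.cos (φ-θ)) / (r^2 + r₀^2 + 2*r*r₀*Real.cos (φ+θ)) := by
  unfold rhoH
  rw [norm_div, div_pow, Complex.sq_norm, Complex.sq_norm]
  congr 1
  · simp [Complex.normSq_apply, Complex.exp_mul_I, Real.cos_sub,
      Complex.cos_ofReal_re, Complex.sin_ofReal_re]
    nlinarith [Real.sin_sq_add_cos_sq φ, Real.sin_sq_add_cos_sq θ]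
  · simp [Complex.normSq_apply, Complex.exp_mul_I, Real.cos_add,
      Complex.cos_ofReal_re, Complex.sin_ofReal_re]
    nlinarith [Real.sin_sq_add_cos_sq φ, Real.sin_sq_add_cos_sq θ]

section key
variable {θ r₀ φ : ℝ}

lemma cos_prod_pos (hθ : θ ∈ Set.Ioo (-(Real.pi/2)) (Real.pi/2))
    (hφ : φ ∈ Set.Ioo (-(Real.pi/2)) (Real.pi/2)) :
    0 < Real.cos (φ - θ) + Real.cos (φ + θ) := by
  rw [Real.cos_sub, Real.cos_add]
  have h1 : 0 < Real.cos θ := Real.cos_pos_of_mem_Ioo ⟨hθ.1, hθ.2⟩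
  have h2 : 0 < Real.cos φ := Real.cos_pos_of_mem_Ioo ⟨hφ.1, hφ.2⟩
  nlinarith

lemma den_pos (hθ : θ ∈ Set.Ioo (-(Real.pi/2)) (Real.pi/2)) (hr₀ : 0 < r₀)
    (hφ : φ ∈ Set.Ioo (-(Real.pi/2)) (Real.pi/2)) {r : ℝ} (hr : 0 < r) :
    0 < r^2 + r₀^2 + 2*r*r₀*Real.cos (φ+θ) := by
  have h := cos_prod_pos hθ hφ
  have h2 : Real.cos (φ - θ) ≤ 1 := Real.cos_le_one _
  have hB : -1 < Real.cos (φ + θ) := by linarith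
  nlinarith [mul_pos (mul_pos hr hr₀) (show (0:ℝ) < 1 + Real.cos (φ+θ) by linarith),
    sq_nonneg (r - r₀)]

lemma rho_lt_one (hθ : θ ∈ Set.Ioo (-(Real.pi/2)) (Real.pi/2)) (hr₀ : 0 < r₀)
    (hφ : φ ∈ Set.Ioo (-(Real.pi/2)) (Real.pi/2)) {r : ℝ} (hr : 0 < r) :
    rhoH ((r:ℂ) * Complex.exp ((φ:ℂ) * I)) ((r₀:ℂ) * Complex.exp ((θ:ℂ) * I)) < 1 := by
  have hD := den_pos hθ hr₀ hφ hr
  have hAB := cos_prod_pos hθ hφ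
  have h1 : (rhoH ((r:ℂ) * Complex.exp ((φ:ℂ) * I)) ((r₀:ℂ) * Complex.exp ((θ:ℂ) * I)))^2
      < 1^2 := by
    rw [rho_sq θ r₀ φ r, one_pow, div_lt_one hD]
    nlinarith [mul_pos (mul_pos hr hr₀) hAB]
  exact lt_of_pow_lt_pow_left₀ 2 zero_le_one h1

/-- Key comparison lemma: if `(r²+r₀²)·r' ≤ (r'²+r₀²)·r` then `dH` at `r` is at most `dH` at `r'`,
and strictly if the inequality is strict. -/
lemma rho_le_rho (hθ : θ ∈ Set.Ioo (-(Real.pi/2)) (Real.pi/2)) (hr₀ : 0 < r₀)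
    (hφ : φ ∈ Set.Ioo (-(Real.pi/2)) (Real.pi/2)) {r r' : ℝ} (hr : 0 < r) (hr' : 0 < r')
    (h : (r^2+r₀^2)*r' ≤ (r'^2+r₀^2)*r) :
    rhoH ((r:ℂ) * Complex.exp ((φ:ℂ) * I)) ((r₀:ℂ) * Complex.exp ((θ:ℂ) * I)) ≤
    rhoH ((r':ℂ) * Complex.exp ((φ:ℂ) * I)) ((r₀:ℂ) * Complex.exp ((θ:ℂ) * I)) := by
  have hD := den_pos hθ hr₀ hφ hr
  have hD' := den_pos hθ hr₀ hφ hr'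
  have hAB := cos_prod_pos hθ hφ
  have hsq : (rhoH ((r:ℂ) * Complex.exp ((φ:ℂ) * I)) ((r₀:ℂ) * Complex.exp ((θ:ℂ) * I)))^2
      ≤ (rhoH ((r':ℂ) * Complex.exp ((φ:ℂ) * I)) ((r₀:ℂ) * Complex.exp ((θ:ℂ) * I)))^2 := by
    rw [rho_sq θ r₀ φ r, rho_sq θ r₀ φ r', div_le_div_iff₀ hD hD']
    nlinarith [mul_nonneg (mul_nonneg hAB.le (by linarith : (0:ℝ) ≤ 2*r₀)) (sub_nonneg.2 h)]
  exact le_of_pow_le_pow_left₀ two_ne_zero (norm_nonneg _) hsq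

lemma rho_lt_rho (hθ : θ ∈ Set.Ioo (-(Real.pi/2)) (Real.pi/2)) (hr₀ : 0 < r₀)
    (hφ : φ ∈ Set.Ioo (-(Real.pi/2)) (Real.pi/2)) {r r' : ℝ} (hr : 0 < r) (hr' : 0 < r')
    (h : (r^2+r₀^2)*r' < (r'^2+r₀^2)*r) :
    rhoH ((r:ℂ) * Complex.exp ((φ:ℂ) * I)) ((r₀:ℂ) * Complex.exp ((θ:ℂ) * I)) <
    rhoH ((r':ℂ) * Complex.exp ((φ:ℂ) * I)) ((r₀:ℂ) * Complex.exp ((θ:ℂ) * I)) := by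
  have hD := den_pos hθ hr₀ hφ hr
  have hD' := den_pos hθ hr₀ hφ hr'
  have hAB := cos_prod_pos hθ hφ
  have hsq : (rhoH ((r:ℂ) * Complex.exp ((φ:ℂ) * I)) ((r₀:ℂ) * Complex.exp ((θ:ℂ) * I)))^2
      < (rhoH ((r':ℂ) * Complex.exp ((φ:ℂ) * I)) ((r₀:ℂ) * Complex.exp ((θ:ℂ) * I)))^2 := by
    rw [rho_sq θ r₀ φ r, rho_sq θ r₀ φ r', div_lt_div_iff₀ hD hD']
    nlinarith [mul_pos (mul_pos hAB (by linarith : (0:ℝ) < 2*r₀)) (sub_pos.2 h)]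
  exact lt_of_pow_lt_pow_left₀ 2 (norm_nonneg _) hsq

lemma dH_mono (hθ : θ ∈ Set.Ioo (-(Real.pi/2)) (Real.pi/2)) (hr₀ : 0 < r₀)
    (hφ : φ ∈ Set.Ioo (-(Real.pi/2)) (Real.pi/2)) {r r' : ℝ} (hr : 0 < r) (hr' : 0 < r')
    (h : (r^2+r₀^2)*r' ≤ (r'^2+r₀^2)*r) :
    dH ((r:ℂ) * Complex.exp ((φ:ℂ) * I)) ((r₀:ℂ) * Complex.exp ((θ:ℂ) * I)) ≤
    dH ((r':ℂ) * Complex.exp ((φ:ℂ) * I)) ((r₀:ℂ) * Complex.exp ((θ:ℂ) * I)) := by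
  have hρ := rho_le_rho hθ hr₀ hφ hr hr' h
  have h1 := rho_lt_one hθ hr₀ hφ hr
  have h1' := rho_lt_one hθ hr₀ hφ hr'
  have h0 : (0:ℝ) ≤ rhoH ((r:ℂ) * Complex.exp ((φ:ℂ) * I)) ((r₀:ℂ) * Complex.exp ((θ:ℂ) * I)) :=
    norm_nonneg _
  unfold dH
  have hle : ((1 + rhoH ((r:ℂ) * Complex.exp ((φ:ℂ) * I)) ((r₀:ℂ) * Complex.exp ((θ:ℂ) * I)))
      / (1 - rhoH ((r:ℂ) * Complex.exp ((φ:ℂ) * I)) ((r₀:ℂ) * Complex.exp ((θ:ℂ) * I)))) ≤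
      ((1 + rhoH ((r':ℂ) * Complex.exp ((φ:ℂ) * I)) ((r₀:ℂ) * Complex.exp ((θ:ℂ) * I)))
      / (1 - rhoH ((r':ℂ) * Complex.exp ((φ:ℂ) * I)) ((r₀:ℂ) * Complex.exp ((θ:ℂ) * I)))) := by
    rw [div_le_div_iff₀ (by linarith) (by linarith)]
    nlinarith
  have hpos : (0:ℝ) < (1 + rhoH ((r:ℂ) * Complex.exp ((φ:ℂ) * I)) ((r₀:ℂ) * Complex.exp ((θ:ℂ) * I)))
      / (1 - rhoH ((r:ℂ) * Complex.exp ((φ:ℂ) * I)) ((r₀:ℂ) * Complex.exp ((θ:ℂ) * I))) := by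
    apply div_pos <;> linarith
  have := Real.log_le_log hpos hle
  linarith

lemma dH_strict_mono (hθ : θ ∈ Set.Ioo (-(Real.pi/2)) (Real.pi/2)) (hr₀ : 0 < r₀)
    (hφ : φ ∈ Set.Ioo (-(Real.pi/2)) (Real.pi/2)) {r r' : ℝ} (hr : 0 < r) (hr' : 0 < r')
    (h : (r^2+r₀^2)*r' < (r'^2+r₀^2)*r) :
    dH ((r:ℂ) * Complex.exp ((φ:ℂ) * I)) ((r₀:ℂ) * Complex.exp ((θ:ℂ) * I)) <
    dH ((r':ℂ) * Complex.exp ((φ:ℂ) * I)) ((r₀:ℂ) * Complex.exp ((θ:ℂ) * I)) := by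
  have hρ := rho_lt_rho hθ hr₀ hφ hr hr' h
  have h1 := rho_lt_one hθ hr₀ hφ hr
  have h1' := rho_lt_one hθ hr₀ hφ hr'
  have h0 : (0:ℝ) ≤ rhoH ((r:ℂ) * Complex.exp ((φ:ℂ) * I)) ((r₀:ℂ) * Complex.exp ((θ:ℂ) * I)) :=
    norm_nonneg _
  unfold dH
  have : ((1 + rhoH ((r:ℂ) * Complex.exp ((φ:ℂ) * I)) ((r₀:ℂ) * Complex.exp ((θ:ℂ) * I)))
      / (1 - rhoH ((r:ℂ) * Complex.exp ((φ:ℂ) * I)) ((r₀:ℂ) * Complex.exp ((θ:ℂ) * I)))) <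
      ((1 + rhoH ((r':ℂ) * Complex.exp ((φ:ℂ) * I)) ((r₀:ℂ) * Complex.exp ((θ:ℂ) * I)))
      / (1 - rhoH ((r':ℂ) * Complex.exp ((φ:ℂ) * I)) ((r₀:ℂ) * Complex.exp ((θ:ℂ) * I)))) := by
    rw [div_lt_div_iff₀ (by linarith) (by linarith)]
    nlinarith
  have hpos : (0:ℝ) < (1 + rhoH ((r:ℂ) * Complex.exp ((φ:ℂ) * I)) ((r₀:ℂ) * Complex.exp ((θ:ℂ) * I)))
      / (1 - rhoH ((r:ℂ) * Complex.exp ((φ:ℂ) * I)) ((r₀:ℂ) * Complex.exp ((θ:ℂ) * I))) := by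
    apply div_pos <;> linarith
  have := Real.log_lt_log hpos this
  linarith

end key

/-- the function r ↦ d_ℍ(re^{iφ}, r₀e^{iθ}) has a minimum at r = r₀,
is strictly decreasing on (0, r₀) and strictly increasing on (r₀, ∞). -/
theorem stmt13 (θ : ℝ) (hθ : θ ∈ Set.Ioo (-(Real.pi/2)) (Real.pi/2))
    (r₀ : ℝ) (hr₀ : 0 < r₀)
    (φ : ℝ) (hφ : φ ∈ Set.Ioo (-(Real.pi/2)) (Real.pi/2)) :
    (∀ r : ℝ, 0 < r →
        dH ((r₀ : ℂ) * Complex.exp ((φ : ℂ) * I)) ((r₀ : ℂ) * Complex.exp ((θ : ℂ) * I)) ≤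
        dH ((r : ℂ) * Complex.exp ((φ : ℂ) * I)) ((r₀ : ℂ) * Complex.exp ((θ : ℂ) * I))) ∧
    StrictAntiOn (fun r : ℝ =>
        dH ((r : ℂ) * Complex.exp ((φ : ℂ) * I)) ((r₀ : ℂ) * Complex.exp ((θ : ℂ) * I)))
      (Set.Ioo 0 r₀) ∧
    StrictMonoOn (fun r : ℝ =>
        dH ((r : ℂ) * Complex.exp ((φ : ℂ) * I)) ((r₀ : ℂ) * Complex.exp ((θ : ℂ) * I)))
      (Set.Ioi r₀) := by
  refine ⟨fun r hr => ?_, fun r hrmem r' hrmem' hlt => ?_, fun r hrmem r' hrmem' hlt => ?_⟩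
  · exact dH_mono hθ hr₀ hφ hr₀ hr (by nlinarith [sq_nonneg (r - r₀)])
  · have h1 : r*r' < r₀*r' := (mul_lt_mul_iff_left₀ hrmem'.1).2 hrmem.2
    have h2 : r₀*r' < r₀*r₀ := (mul_lt_mul_iff_right₀ hr₀).2 hrmem'.2
    exact dH_strict_mono hθ hr₀ hφ hrmem'.1 hrmem.1
      (by nlinarith [mul_pos (sub_pos.2 hlt) (show (0:ℝ) < r₀^2 - r*r' by nlinarith)])
  · have hr : 0 < r := lt_trans hr₀ hrmem
    have hr' : 0 < r' := lt_trans hr hlt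
    have h1 : r₀*r₀ < r*r₀ := (mul_lt_mul_iff_left₀ hr₀).2 hrmem
    have h2 : r*r₀ < r*r' := by nlinarith
    exact dH_strict_mono hθ hr₀ hφ hr hr'
      (by nlinarith [mul_pos (sub_pos.2 hlt) (show (0:ℝ) < r*r' - r₀^2 by nlinarith)])
end

section
/- For every real x > 1 and every t > 0, d_ℍ(x, 1) < d_ℍ(x, 1 + it); consequently, the hyperbolic projection of x onto the vertical ray γ(t) = 1 + it, t ≥ 0, is the point 1. In particular, for f(z) = 2z the projections of the orbit points f^n(1) = 2^n onto γ are all equal to 1, so the sequence of projections of a hyperbolic orbit onto a curve landing at ∞ with arg γ(t) → π/2 can be constant. -/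
open Complex Filter Topology

lemma rho1 (x : ℝ) (hx : 1 ≤ x) : rhoH (x:ℂ) 1 = (x-1)/(x+1) := by
  unfold rhoH
  rw [norm_div]
  have h1 : ((x:ℂ) - 1) = ((x-1:ℝ):ℂ) := by push_cast; ring
  have h2 : ((x:ℂ) + (starRingEnd ℂ) 1) = ((x+1:ℝ):ℂ) := by
    push_cast [map_one]; ring
  rw [h1, h2]
  simp only [Complex.norm_real, Real.norm_eq_abs]
  rw [_root_.abs_of_nonneg (by linarith : (0:ℝ) ≤ x-1), _root_.abs_of_nonneg (by linarith : (0:ℝ) ≤ x+1)]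

lemma rho2 (x t : ℝ) : rhoH (x:ℂ) (1 + t*I)
    = Real.sqrt ((x-1)^2+t^2) / Real.sqrt ((x+1)^2+t^2) := by
  unfold rhoH
  rw [norm_div, Complex.norm_def, Complex.norm_def]
  congr 1 <;> simp [Complex.normSq_apply] <;> ring

lemma dH_key (x t : ℝ) (hx : 1 ≤ x) (ht : 0 ≤ t) :
    dH (x:ℂ) 1 ≤ dH (x:ℂ) (1 + t*I) ∧ (1 < x → 0 < t → dH (x:ℂ) 1 < dH (x:ℂ) (1 + t*I)) := by
  rw [dH, dH, rho1 x hx, rho2 x t]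
  set a := (x-1)/(x+1) with ha
  set b := Real.sqrt ((x-1)^2+t^2) / Real.sqrt ((x+1)^2+t^2) with hb
  have hx1 : (0:ℝ) < x + 1 := by linarith
  have ha0 : 0 ≤ a := div_nonneg (by linarith) (by linarith)
  have ha1 : a < 1 := by rw [div_lt_one hx1]; linarith
  have hs2 : (0:ℝ) < Real.sqrt ((x+1)^2+t^2) := Real.sqrt_pos.mpr (by positivity)
  have hb0 : 0 ≤ b := div_nonneg (Real.sqrt_nonneg _) (Real.sqrt_nonneg _)
  have hb1 : b < 1 := by
    rw [div_lt_one hs2]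
    exact Real.sqrt_lt_sqrt (by positivity) (by nlinarith)
  have hab : a ≤ b := by
    rw [div_le_div_iff₀ hx1 hs2]
    have h1 : (x-1) * Real.sqrt ((x+1)^2+t^2) ≤ Real.sqrt ((x-1)^2*((x+1)^2+t^2)) := by
      rw [Real.sqrt_mul (by positivity), Real.sqrt_sq (by linarith)]
    have h2 : Real.sqrt ((x-1)^2*((x+1)^2+t^2)) ≤ Real.sqrt (((x-1)^2+t^2)*(x+1)^2) := by
      apply Real.sqrt_le_sqrt; nlinarith [sq_nonneg t, sq_nonneg (x-1)]
    have h3 : Real.sqrt (((x-1)^2+t^2)*(x+1)^2) = Real.sqrt ((x-1)^2+t^2) * (x+1) := by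
      rw [Real.sqrt_mul (by positivity), Real.sqrt_sq (by linarith)]
    linarith
  have hab' : 1 < x → 0 < t → a < b := by
    intro hx' ht'
    rw [div_lt_div_iff₀ hx1 hs2]
    have h1 : (x-1) * Real.sqrt ((x+1)^2+t^2) = Real.sqrt ((x-1)^2*((x+1)^2+t^2)) := by
      rw [Real.sqrt_mul (by positivity), Real.sqrt_sq (by linarith)]
    have h2 : Real.sqrt ((x-1)^2*((x+1)^2+t^2)) < Real.sqrt (((x-1)^2+t^2)*(x+1)^2) := by
      apply Real.sqrt_lt_sqrt (by positivity); nlinarith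
    have h3 : Real.sqrt (((x-1)^2+t^2)*(x+1)^2) = Real.sqrt ((x-1)^2+t^2) * (x+1) := by
      rw [Real.sqrt_mul (by positivity), Real.sqrt_sq (by linarith)]
    linarith
  constructor
  · apply mul_le_mul_of_nonneg_left _ (by norm_num : (0:ℝ) ≤ 1/2)
    apply Real.log_le_log (div_pos (by linarith) (by linarith))
    rw [div_le_div_iff₀ (by linarith) (by linarith)]
    nlinarith
  · intro hx' ht'
    have := hab' hx' ht'
    apply mul_lt_mul_of_pos_left _ (by norm_num : (0:ℝ) < 1/2)
    apply Real.log_lt_log (div_pos (by linarith) (by linarith))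
    rw [div_lt_div_iff₀ (by linarith) (by linarith)]
    nlinarith


lemma proj_of_real (x : ℝ) (hx : 1 ≤ x) :
    IsProjH (fun t : ℝ => 1 + (t : ℂ) * I) ((x : ℂ)) 1 := by
  constructor
  · exact ⟨0, le_refl 0, by simp⟩
  · intro t ht
    have h1 : (1:ℂ) = 1 + (0:ℝ)*I := by simp
    calc dH (x:ℂ) 1 = dH (x:ℂ) (1 + (0:ℝ)*I) := by rw [← h1]
      _ ≤ dH (x:ℂ) (1 + (t:ℝ)*I) := by
          have := (dH_key x t hx ht).1
          convert this using 3 <;> push_cast <;> ring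
    
lemma iter_two (n : ℕ) : (fun z : ℂ => 2 * z)^[n] 1 = ((2^n : ℝ) : ℂ) := by
  induction n with
  | zero => simp
  | succ n ih => rw [Function.iterate_succ_apply', ih]; push_cast; ring


/-- for x > 1 and t > 0 we have d_ℍ(x, 1) < d_ℍ(x, 1 + it); hence the
projection of x onto the vertical ray γ(t) = 1 + it is the point 1, and in
particular the projections of the orbit (2z)^{∘n}(1) = 2ⁿ onto γ are all 1, so the
sequence of projections of a hyperbolic orbit onto a curve landing at ∞ with
arg γ(t) → π/2 can be constant. -/
theorem stmt16 :
    (∀ x : ℝ, 1 < x → ∀ t : ℝ, 0 < t →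
        dH ((x : ℂ)) 1 < dH ((x : ℂ)) (1 + (t : ℂ) * I)) ∧
    (∀ x : ℝ, 1 < x → IsProjH (fun t : ℝ => 1 + (t : ℂ) * I) ((x : ℂ)) 1) ∧
    (∀ n : ℕ, IsProjH (fun t : ℝ => 1 + (t : ℂ) * I) ((fun z : ℂ => 2 * z)^[n] 1) 1) := by
  refine ⟨?_, ?_, ?_⟩
  · intro x hx t ht
    exact (dH_key x t hx.le ht.le).2 hx ht
  · intro x hx
    exact proj_of_real x hx.le
  · intro n
    rw [iter_two n]
    exact proj_of_real (2^n) (one_le_pow₀ (by norm_num))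
end

section
/- Let f : ℍ → ℍ be the parabolic map f(z) = z + 1, whose Denjoy–Wolff point is ∞. There exist a continuous curve γ : [0,∞) → ℍ landing at ∞ with arg(γ(t)) → 0 as t → ∞, and for each n ∈ ℕ a projection π_n of f^n(1) onto γ, such that the sequence {d_ℍ(1, π_n)} is not eventually strictly increasing; in fact π_{3n−2} = π_{3n−1} for all n ∈ ℕ. Hence the strict monotonicity of projections fails for parabolic self-maps of ℍ. -/
open Complex Filter Topology

noncomputable def Qr (n : ℕ) : ℝ := if n = 0 then 1 else 3*n + 1/(3*n)
noncomputable def Lr (n : ℕ) : ℝ := (3*(n:ℝ)-1)^2 / Qr n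
noncomputable def Tr (n : ℕ) : ℝ := ((Qr n)^2 - (3*(n:ℝ)-1)^2) / (2*(3*(n:ℝ)-1)*(Qr n))

lemma Qr_zero : Qr 0 = 1 := by simp [Qr]

lemma Qr_eq {n : ℕ} (hn : 1 ≤ n) : Qr n = 3*n + 1/(3*n) := by
  rw [Qr, if_neg (by omega)]

lemma Qr_pos (n : ℕ) : 0 < Qr n := by
  rcases Nat.eq_zero_or_pos n with h | h
  · simp [h, Qr_zero]
  · rw [Qr_eq h]
    have : (1:ℝ) ≤ n := by exact_mod_cast h
    positivity

lemma Qr_one : Qr 1 = 10/3 := by rw [Qr_eq le_rfl]; norm_num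

lemma Qr_lb {n : ℕ} (hn : 1 ≤ n) : 3*(n:ℝ) < Qr n := by
  rw [Qr_eq hn]
  have : (1:ℝ) ≤ n := by exact_mod_cast hn
  have : 0 < 1/(3*(n:ℝ)) := by positivity
  linarith

lemma Qr_ub {n : ℕ} (hn : 1 ≤ n) : Qr n ≤ 3*(n:ℝ) + 1/3 := by
  rw [Qr_eq hn]
  have h1 : (1:ℝ) ≤ n := by exact_mod_cast hn
  have h3 : (3:ℝ) ≤ 3*n := by linarith
  have := one_div_le_one_div_of_le (by norm_num : (0:ℝ) < 3) h3
  linarith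

lemma Qr_ge_one (n : ℕ) : 1 ≤ Qr n := by
  rcases Nat.eq_zero_or_pos n with h | h
  · simp [h, Qr_zero]
  · have := Qr_lb h
    have : (1:ℝ) ≤ n := by exact_mod_cast h
    nlinarith [Qr_lb h]

lemma Qr_le (n : ℕ) : Qr n ≤ 3*(n:ℝ) + 1 := by
  rcases Nat.eq_zero_or_pos n with h | h
  · simp [h, Qr_zero]
  · have := Qr_ub h; linarith

lemma a_pos {n : ℕ} (hn : 1 ≤ n) : (2:ℝ) ≤ 3*(n:ℝ) - 1 := by
  have : (1:ℝ) ≤ n := by exact_mod_cast hn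
  linarith

lemma Lr_pos {n : ℕ} (hn : 1 ≤ n) : 0 < Lr n := by
  have ha := a_pos hn
  have hq := Qr_pos n
  rw [Lr]; positivity

lemma Lr_lb {n : ℕ} (hn : 1 ≤ n) : 3*(n:ℝ) - 2 < Lr n := by
  rw [Lr, lt_div_iff₀ (Qr_pos n), Qr_eq hn]
  have h1 : (1:ℝ) ≤ n := by exact_mod_cast hn
  have h3 : (0:ℝ) < 3*n := by linarith
  have key : (3*(n:ℝ)-2) * (3*n + 1/(3*n)) * (3*n) < (3*(n:ℝ)-1)^2 * (3*n) := by
    field_simp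
    ring_nf
    nlinarith [sq_nonneg ((n:ℝ))]
  exact lt_of_mul_lt_mul_right (by linarith [key]) (le_of_lt h3) |>.trans_le le_rfl

lemma Lr_ub {n : ℕ} (hn : 1 ≤ n) : Lr n < 3*(n:ℝ) - 1 := by
  rw [Lr, div_lt_iff₀ (Qr_pos n)]
  have ha := a_pos hn
  nlinarith [Qr_lb hn]

lemma LQ {n : ℕ} (hn : 1 ≤ n) : Lr n * Qr n = (3*(n:ℝ)-1)^2 := by
  rw [Lr, div_mul_cancel₀]
  exact ne_of_gt (Qr_pos n)

lemma Tr_nonneg {n : ℕ} (hn : 1 ≤ n) : 0 ≤ Tr n := by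
  have ha := a_pos hn
  have hq := Qr_lb hn
  have h1 : (1:ℝ) ≤ n := by exact_mod_cast hn
  have hnum : 0 ≤ (Qr n)^2 - (3*(n:ℝ)-1)^2 := by nlinarith
  have hden : 0 < 2*(3*(n:ℝ)-1)*(Qr n) := by nlinarith
  exact div_nonneg hnum hden.le

lemma Tr_spec {n : ℕ} (hn : 1 ≤ n) :
    Tr n * (2*(3*(n:ℝ)-1)*(Qr n)) = (Qr n)^2 - (3*(n:ℝ)-1)^2 := by
  have ha := a_pos hn
  have hq := Qr_pos n
  rw [Tr, div_mul_cancel₀]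
  exact ne_of_gt (by nlinarith)

lemma Lr_one : Lr 1 = 6/5 := by rw [Lr, Qr_one]; norm_num

noncomputable def Uf (k : ℕ) : ℝ :=
  if k % 4 = 0 then Qr (k/4) else if k % 4 = 3 then Qr (k/4+1) else Lr (k/4+1)

noncomputable def Wf (k : ℕ) : ℝ :=
  if k % 4 = 2 then Lr (k/4+1) * Tr (k/4+1)
  else if k % 4 = 3 then Qr (k/4+1) * Tr (k/4+1) else 0

noncomputable def Vf (k : ℕ) : ℂ := ⟨Uf k, Wf k⟩

noncomputable def gam (t : ℝ) : ℂ :=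
  Vf ⌊t⌋₊ + ((t - (⌊t⌋₊ : ℝ)) : ℂ) * (Vf (⌊t⌋₊ + 1) - Vf ⌊t⌋₊)

lemma Qr_le_Lr_succ (q : ℕ) : Qr q ≤ Lr (q+1) := by
  rcases Nat.eq_zero_or_pos q with h | h
  · subst h; rw [Qr_zero, Lr_one]; norm_num
  · have h1 : Qr q ≤ 3*(q:ℝ) + 1 := Qr_le q
    have h2 : 3*((q:ℕ)+1:ℝ) - 2 < Lr (q+1) := by
      have := Lr_lb (n := q+1) (by omega)
      push_cast at this ⊢; linarith
    push_cast at h2 ⊢; linarith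

lemma Uf_succ (k : ℕ) : Uf k ≤ Uf (k+1) := by
  have h4 : k % 4 = 0 ∨ k % 4 = 1 ∨ k % 4 = 2 ∨ k % 4 = 3 := by omega
  rcases h4 with h | h | h | h
  · have h1 : (k+1) % 4 = 1 := by omega
    have h2 : (k+1)/4 = k/4 := by omega
    rw [Uf, Uf, if_pos h, if_neg (by omega), if_neg (by omega), h2]
    exact Qr_le_Lr_succ (k/4)
  · have h1 : (k+1) % 4 = 2 := by omega
    have h2 : (k+1)/4 = k/4 := by omega
    rw [Uf, Uf, if_neg (by omega), if_neg (by omega), if_neg (by omega), if_neg (by omega), h2]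
  · have h1 : (k+1) % 4 = 3 := by omega
    have h2 : (k+1)/4 = k/4 := by omega
    rw [Uf, Uf, if_neg (by omega), if_neg (by omega), if_neg (by omega), if_pos h1, h2]
    have hL := Lr_ub (n := k/4+1) (by omega)
    have hQ := Qr_lb (n := k/4+1) (by omega)
    linarith
  · have h1 : (k+1) % 4 = 0 := by omega
    have h2 : (k+1)/4 = k/4 + 1 := by omega
    rw [Uf, Uf, if_neg (by omega), if_pos h, if_pos h1, h2]

lemma Uf_mono : Monotone Uf := monotone_nat_of_le_succ Uf_succ

lemma Uf_ge_one (k : ℕ) : 1 ≤ Uf k := by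
  have : Uf 0 ≤ Uf k := Uf_mono (Nat.zero_le k)
  have h0 : Uf 0 = 1 := by rw [Uf]; simp [Qr_zero]
  linarith

lemma Wf_nonneg (k : ℕ) : 0 ≤ Wf k := by
  rw [Wf]
  split
  · exact mul_nonneg (Lr_pos (by omega)).le (Tr_nonneg (by omega))
  split
  · exact mul_nonneg (Qr_pos _).le (Tr_nonneg (by omega))
  · exact le_refl 0

lemma gam_re (t : ℝ) :
    (gam t).re = Uf ⌊t⌋₊ + (t - (⌊t⌋₊:ℝ)) * (Uf (⌊t⌋₊+1) - Uf ⌊t⌋₊) := by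
  simp [gam, Vf, Complex.add_re, Complex.mul_re]

lemma gam_im (t : ℝ) :
    (gam t).im = Wf ⌊t⌋₊ + (t - (⌊t⌋₊:ℝ)) * (Wf (⌊t⌋₊+1) - Wf ⌊t⌋₊) := by
  simp [gam, Vf, Complex.add_im, Complex.mul_im]

lemma s_nonneg {t : ℝ} (ht : 0 ≤ t) : 0 ≤ t - (⌊t⌋₊:ℝ) :=
  sub_nonneg.2 (Nat.floor_le ht)

lemma s_lt_one (t : ℝ) : t - (⌊t⌋₊:ℝ) < 1 := by
  have := Nat.lt_floor_add_one t
  linarith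

lemma gam_re_bounds {t : ℝ} (ht : 0 ≤ t) :
    Uf ⌊t⌋₊ ≤ (gam t).re ∧ (gam t).re ≤ Uf (⌊t⌋₊+1) := by
  rw [gam_re]
  have h1 := s_nonneg ht
  have h2 := (s_lt_one t).le
  have h3 := Uf_succ ⌊t⌋₊
  constructor <;> nlinarith

lemma gam_re_pos {t : ℝ} (ht : 0 ≤ t) : 0 < (gam t).re := by
  have := (gam_re_bounds ht).1
  have := Uf_ge_one ⌊t⌋₊
  linarith

lemma gam_im_nonneg {t : ℝ} (ht : 0 ≤ t) : 0 ≤ (gam t).im := by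
  rw [gam_im]
  have h1 := s_nonneg ht
  have h2 := (s_lt_one t).le
  have h3 := Wf_nonneg ⌊t⌋₊
  have h4 := Wf_nonneg (⌊t⌋₊+1)
  nlinarith

lemma rhoH_nonneg (z w : ℂ) : 0 ≤ rhoH z w := norm_nonneg _

lemma rhoH_lt_one {z w : ℂ} (hz : 0 < z.re) (hw : 0 < w.re) : rhoH z w < 1 := by
  rw [rhoH, norm_div]
  have hd : 0 < ‖z + (starRingEnd ℂ) w‖ := by
    apply norm_pos_iff.mpr
    intro h
    have : (z + (starRingEnd ℂ) w).re = 0 := by rw [h]; simp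
    simp [Complex.add_re, Complex.conj_re] at this
    linarith
  rw [div_lt_one hd]
  have h1 : (‖z - w‖)^2 < (‖z + (starRingEnd ℂ) w‖)^2 := by
    rw [Complex.sq_norm, Complex.sq_norm, Complex.normSq_apply, Complex.normSq_apply]
    simp only [Complex.sub_re, Complex.sub_im, Complex.add_re, Complex.add_im,
      Complex.conj_re, Complex.conj_im]
    nlinarith
  exact lt_of_pow_lt_pow_left₀ 2 hd.le h1

lemma rho_ge {x : ℝ} (hx : 0 < x) {w : ℂ} (hw : 0 ≤ w.re) {r : ℝ} (hr : 0 ≤ r)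
    (h : r^2 * ((x + w.re)^2 + w.im^2) ≤ (x - w.re)^2 + w.im^2) :
    r ≤ rhoH (x:ℂ) w := by
  rw [rhoH, norm_div]
  have hd : 0 < ‖(x:ℂ) + (starRingEnd ℂ) w‖ := by
    apply norm_pos_iff.mpr
    intro hh
    have : ((x:ℂ) + (starRingEnd ℂ) w).re = 0 := by rw [hh]; simp
    simp [Complex.add_re, Complex.conj_re] at this
    linarith
  rw [le_div_iff₀ hd]
  have hs : (r * ‖(x:ℂ) + (starRingEnd ℂ) w‖)^2 ≤ (‖(x:ℂ) - w‖)^2 := by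
    rw [mul_pow, Complex.sq_norm, Complex.sq_norm, Complex.normSq_apply, Complex.normSq_apply]
    simp only [Complex.sub_re, Complex.sub_im, Complex.add_re, Complex.add_im,
      Complex.conj_re, Complex.conj_im, Complex.ofReal_re, Complex.ofReal_im]
    nlinarith [h]
  have hrd : 0 ≤ r * ‖(x:ℂ) + (starRingEnd ℂ) w‖ := mul_nonneg hr hd.le
  calc r * ‖(x:ℂ) + (starRingEnd ℂ) w‖
      = Real.sqrt ((r * ‖(x:ℂ) + (starRingEnd ℂ) w‖)^2) := (Real.sqrt_sq hrd).symm
    _ ≤ Real.sqrt ((‖(x:ℂ) - w‖)^2) := Real.sqrt_le_sqrt hs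
    _ = ‖(x:ℂ) - w‖ := Real.sqrt_sq (norm_nonneg _)

lemma rhoH_self (z : ℂ) : rhoH z z = 0 := by
  simp [rhoH]

lemma dH_self (z : ℂ) : dH z z = 0 := by
  simp [dH, rhoH_self]

lemma dH_nonneg {z w : ℂ} (hz : 0 < z.re) (hw : 0 < w.re) : 0 ≤ dH z w := by
  have h1 := rhoH_nonneg z w
  have h2 := rhoH_lt_one hz hw
  have : (1:ℝ) ≤ (1 + rhoH z w) / (1 - rhoH z w) := by
    rw [le_div_iff₀ (by linarith)]
    linarith
  have := Real.log_nonneg this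
  rw [dH]; linarith

lemma dH_mono_s17 {z w p : ℂ} (h : rhoH z p ≤ rhoH z w) (h1 : rhoH z w < 1) :
    dH z p ≤ dH z w := by
  have h0 := rhoH_nonneg z p
  have hp1 : rhoH z p < 1 := lt_of_le_of_lt h h1
  rw [dH, dH]
  have hnum : (0:ℝ) < 1 + rhoH z p := by linarith
  have hden : (0:ℝ) < 1 - rhoH z p := by linarith
  have hden2 : (0:ℝ) < 1 - rhoH z w := by linarith
  have hfrac : (1 + rhoH z p) / (1 - rhoH z p) ≤ (1 + rhoH z w) / (1 - rhoH z w) := by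
    rw [div_le_div_iff₀ hden hden2]
    nlinarith
  have := Real.log_le_log (div_pos hnum hden) hfrac
  linarith

lemma rhoH_real {x q : ℝ} (hx : 0 < x) (hq : x ≤ q) : rhoH (x:ℂ) (q:ℂ) = (q-x)/(q+x) := by
  rw [rhoH]
  rw [show ((x:ℂ) - q) / ((x:ℂ) + (starRingEnd ℂ) q) = (((x-q)/(x+q) : ℝ) : ℂ) by
    rw [Complex.conj_ofReal]; push_cast; ring]
  rw [Complex.norm_real, Real.norm_eq_abs, abs_div, _root_.abs_of_nonpos (by linarith : x - q ≤ 0),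
    _root_.abs_of_nonneg (by linarith : (0:ℝ) ≤ x + q)]
  ring

lemma lemP {x Q u v : ℝ} (hx : 0 < x) (hQ : 0 < Q) (h : 0 ≤ (u - Q)*(u*Q - x^2)) :
    (Q-x)^2*((x+u)^2+v^2) ≤ (Q+x)^2*((x-u)^2+v^2) := by
  nlinarith [mul_nonneg (by positivity : (0:ℝ) ≤ 4*x) h,
    mul_nonneg (mul_nonneg (by positivity : (0:ℝ) ≤ 4*x) hQ.le) (sq_nonneg v)]

lemma lemT {a Q x u v : ℝ} (ha : 0 < a) (haQ : a < Q) (hax : a ≤ x) (hxQ : x ≤ Q)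
    (hv2 : (v*(2*a*Q))^2 = (u*(Q^2-a^2))^2) :
    (Q-x)^2*((x+u)^2+v^2) ≤ (Q+x)^2*((x-u)^2+v^2) := by
  have key : (2*a*Q)^2 * ((Q+a)^2*((x-u)^2+v^2)) - (2*a*Q)^2*((Q-a)^2*((x+u)^2+v^2))
      = 4*a*Q*(2*a*Q*x - u*(a^2+Q^2))^2 := by linear_combination (4*a*Q) * hv2
  have haQ0 : (0:ℝ) < 2*a*Q := by nlinarith
  have step1 : (Q-a)^2*((x+u)^2+v^2) ≤ (Q+a)^2*((x-u)^2+v^2) := by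
    nlinarith [key, sq_nonneg (2*a*Q*x - u*(a^2+Q^2)), sq_nonneg (2*a*Q), mul_pos haQ0 haQ0]
  have h1 : (Q-x)*(Q+a) ≤ (Q-a)*(Q+x) := by nlinarith
  have h1' : 0 ≤ (Q-x)*(Q+a) := mul_nonneg (by linarith) (by linarith)
  have e1 : ((Q-x)*(Q+a))^2 ≤ ((Q-a)*(Q+x))^2 := by nlinarith
  have hN2 : (0:ℝ) ≤ (x+u)^2+v^2 := by positivity
  have hN1 : (0:ℝ) ≤ (x-u)^2+v^2 := by positivity
  have hc : (0:ℝ) < (Q+a)^2 := by nlinarith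
  have big : (Q+a)^2 * ((Q-x)^2*((x+u)^2+v^2)) ≤ (Q+a)^2 * ((Q+x)^2*((x-u)^2+v^2)) := by
    calc (Q+a)^2 * ((Q-x)^2*((x+u)^2+v^2)) = ((Q-x)*(Q+a))^2 * ((x+u)^2+v^2) := by ring
      _ ≤ ((Q-a)*(Q+x))^2 * ((x+u)^2+v^2) := by
          exact mul_le_mul_of_nonneg_right e1 hN2
      _ = (Q+x)^2 * ((Q-a)^2*((x+u)^2+v^2)) := by ring
      _ ≤ (Q+x)^2 * ((Q+a)^2*((x-u)^2+v^2)) := by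
          exact mul_le_mul_of_nonneg_left step1 (by positivity)
      _ = (Q+a)^2 * ((Q+x)^2*((x-u)^2+v^2)) := by ring
  exact le_of_mul_le_mul_left big hc

lemma Uf_eval0 (q : ℕ) : Uf (4*q) = Qr q := by
  have h1 : (4*q) % 4 = 0 := by omega
  have h2 : (4*q)/4 = q := by omega
  rw [Uf, if_pos h1, h2]

lemma Uf_eval1 (q : ℕ) : Uf (4*q+1) = Lr (q+1) := by
  have h1 : (4*q+1) % 4 = 1 := by omega
  have h2 : (4*q+1)/4 = q := by omega
  rw [Uf, if_neg (by omega), if_neg (by omega), h2]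

lemma Uf_eval2 (q : ℕ) : Uf (4*q+2) = Lr (q+1) := by
  have h1 : (4*q+2) % 4 = 2 := by omega
  have h2 : (4*q+2)/4 = q := by omega
  rw [Uf, if_neg (by omega), if_neg (by omega), h2]

lemma Uf_eval3 (q : ℕ) : Uf (4*q+3) = Qr (q+1) := by
  have h1 : (4*q+3) % 4 = 3 := by omega
  have h2 : (4*q+3)/4 = q := by omega
  rw [Uf, if_neg (by omega), if_pos h1, h2]

lemma Wf_eval0 (q : ℕ) : Wf (4*q) = 0 := by
  rw [Wf, if_neg (by omega), if_neg (by omega)]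

lemma Wf_eval1 (q : ℕ) : Wf (4*q+1) = 0 := by
  rw [Wf, if_neg (by omega), if_neg (by omega)]

lemma Wf_eval2 (q : ℕ) : Wf (4*q+2) = Lr (q+1) * Tr (q+1) := by
  have h1 : (4*q+2) % 4 = 2 := by omega
  have h2 : (4*q+2)/4 = q := by omega
  rw [Wf, if_pos h1, h2]

lemma Wf_eval3 (q : ℕ) : Wf (4*q+3) = Qr (q+1) * Tr (q+1) := by
  have h1 : (4*q+3) % 4 = 3 := by omega
  have h2 : (4*q+3)/4 = q := by omega
  rw [Wf, if_neg (by omega), if_pos h1, h2]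

lemma seg_bound {n : ℕ} (hn : 1 ≤ n) {x : ℝ} (hx1 : 3*(n:ℝ) - 1 ≤ x) (hx2 : x ≤ 3*(n:ℝ))
    {t : ℝ} (ht : 0 ≤ t) : (Qr n - x)/(Qr n + x) ≤ rhoH (x:ℂ) (gam t) := by
  set k := ⌊t⌋₊ with hk
  set s := t - (k:ℝ) with hs
  have hs0 : 0 ≤ s := s_nonneg ht
  have hs1 : s < 1 := s_lt_one t
  have hn1 : (1:ℝ) ≤ n := by exact_mod_cast hn
  have hx0 : 0 < x := by linarith
  have hQ := Qr_pos n
  have hQlb := Qr_lb hn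
  have hQub := Qr_ub hn
  have hLlb := Lr_lb hn
  have hLub := Lr_ub hn
  have hr0 : 0 ≤ (Qr n - x)/(Qr n + x) := by
    apply div_nonneg <;> linarith
  apply rho_ge hx0 (gam_re_pos ht).le hr0
  obtain ⟨m, rfl⟩ : ∃ m, n = m+1 := ⟨n-1, by omega⟩
  have hub := (gam_re_bounds ht).2
  have hlb := (gam_re_bounds ht).1
  rw [gam_re, gam_im]
  set u := Uf k + s * (Uf (k+1) - Uf k) with hu
  set v := Wf k + s * (Wf (k+1) - Wf k) with hv
  clear_value u v
  have hmain : (Qr (m+1) - x)^2*((x+u)^2+v^2) ≤ (Qr (m+1) + x)^2*((x-u)^2+v^2) := by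
    have hcase : k+1 ≤ 4*m+2 ∨ k = 4*m+2 ∨ k = 4*m+3 ∨ 4*(m+1) ≤ k := by omega
    rcases hcase with hc | hc | hc | hc
    · -- u ≤ Lr (m+1)
      have huL : u ≤ Lr (m+1) := by
        have h1 : Uf (k+1) ≤ Uf (4*m+2) := Uf_mono hc
        rw [Uf_eval2] at h1
        have h2 : u ≤ Uf (k+1) := by
          have := Uf_succ k
          nlinarith
        linarith
      apply lemP hx0 hQ
      have h3 : u * Qr (m+1) ≤ Lr (m+1) * Qr (m+1) :=
        mul_le_mul_of_nonneg_right huL hQ.le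
      rw [LQ hn] at h3
      have hneg1 : u - Qr (m+1) ≤ 0 := by linarith
      have hneg2 : u * Qr (m+1) - x^2 ≤ 0 := by nlinarith
      nlinarith [mul_nonneg (neg_nonneg.2 hneg1) (neg_nonneg.2 hneg2)]
    · -- top segment
      have hk1 : Uf k = Lr (m+1) := by rw [hc, Uf_eval2]
      have hk2 : Uf (k+1) = Qr (m+1) := by rw [hc, show 4*m+2+1 = 4*m+3 from rfl, Uf_eval3]
      have hw1 : Wf k = Lr (m+1) * Tr (m+1) := by rw [hc, Wf_eval2]
      have hw2 : Wf (k+1) = Qr (m+1) * Tr (m+1) := by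
        rw [hc, show 4*m+2+1 = 4*m+3 from rfl, Wf_eval3]
      have hvu : v = u * Tr (m+1) := by rw [hv, hu, hk1, hk2, hw1, hw2]; ring
      have ha : (0:ℝ) < 3*((m+1:ℕ):ℝ) - 1 := by linarith [a_pos hn]
      have haQ : 3*((m+1:ℕ):ℝ) - 1 < Qr (m+1) := by linarith
      apply lemT ha haQ hx1 (by linarith)
      rw [hvu, mul_assoc, Tr_spec hn]
    · -- right vertical
      have hk1 : Uf k = Qr (m+1) := by rw [hc, Uf_eval3]
      have hk2 : Uf (k+1) = Qr (m+1) := by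
        rw [hc, show 4*m+3+1 = 4*(m+1) from by ring, Uf_eval0]
      have huQ : u = Qr (m+1) := by rw [hu, hk1, hk2]; ring
      apply lemP hx0 hQ
      rw [huQ, sub_self, zero_mul]
    · -- after the window
      have huQ : Qr (m+1) ≤ u := by
        have h1 : Uf (4*(m+1)) ≤ Uf k := Uf_mono hc
        rw [Uf_eval0] at h1
        have h2 : Uf k ≤ u := by
          have := Uf_succ k
          nlinarith
        linarith
      apply lemP hx0 hQ
      apply mul_nonneg (by linarith)
      nlinarith
  have hQx : (0:ℝ) < Qr (m+1) + x := by linarith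
  rw [div_pow, div_mul_eq_mul_div, div_le_iff₀ (by positivity)]
  exact le_trans hmain (le_of_eq (by ring))

lemma Vf_real0 (n : ℕ) : Vf (4*n) = ((Qr n : ℝ) : ℂ) := by
  apply Complex.ext <;> simp [Vf, Uf_eval0, Wf_eval0]

lemma Vf_real1 (n : ℕ) : Vf (4*n+1) = ((Lr (n+1) : ℝ) : ℂ) := by
  apply Complex.ext <;> simp [Vf, Uf_eval1, Wf_eval1]

lemma gam_nat (k : ℕ) : gam (k:ℝ) = Vf k := by
  rw [gam, Nat.floor_natCast]
  simp

lemma Qr_le3 (r : ℕ) : Qr r ≤ 3*(r:ℝ)+1 := Qr_le r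

lemma proj_main {n : ℕ} (hn : 1 ≤ n) {x : ℝ} (hx0 : 0 < x) (hx1 : 3*(n:ℝ)-1 ≤ x)
    (hx2 : x ≤ 3*(n:ℝ)) : IsProjH gam ((x : ℝ) : ℂ) ((Qr n : ℝ) : ℂ) := by
  constructor
  · refine ⟨((4*n : ℕ):ℝ), by positivity, ?_⟩
    rw [gam_nat, Vf_real0]
  · intro t ht
    have hxQ : x ≤ Qr n := by linarith [Qr_lb hn]
    apply dH_mono_s17
    · rw [rhoH_real hx0 hxQ]
      exact seg_bound hn hx1 hx2 ht
    · exact rhoH_lt_one (by simpa using hx0) (gam_re_pos ht)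

lemma proj_triv (r : ℕ) : IsProjH gam ((3*(r:ℝ)+1 : ℝ) : ℂ) ((3*(r:ℝ)+1 : ℝ) : ℂ) := by
  have hQ3 := Qr_le3 r
  have hL3 : (3*(r:ℝ)+1) < Lr (r+1) := by
    have := Lr_lb (n := r+1) (by omega)
    push_cast at this; linarith
  have hden : 0 < Lr (r+1) - Qr r := by linarith
  set s₀ := ((3*(r:ℝ)+1) - Qr r)/(Lr (r+1) - Qr r) with hs₀
  have hs0 : 0 ≤ s₀ := div_nonneg (by linarith) hden.le
  have hs1 : s₀ < 1 := by
    rw [hs₀, div_lt_one hden]; linarith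
  constructor
  · refine ⟨(4*r : ℕ) + s₀, by positivity, ?_⟩
    have hfl : ⌊((4*r : ℕ):ℝ) + s₀⌋₊ = 4*r := by
      rw [Nat.floor_eq_iff (by positivity)]
      constructor
      · push_cast; linarith
      · push_cast; linarith
    rw [gam, hfl, Vf_real0, Vf_real1]
    have key : Qr r + s₀ * (Lr (r+1) - Qr r) = 3*(r:ℝ)+1 := by
      rw [hs₀, div_mul_cancel₀ _ (ne_of_gt hden)]; ring
    rw [← key]
    push_cast
    ring
  · intro t ht
    rw [dH_self]
    apply dH_nonneg _ (gam_re_pos ht)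
    simp only [Complex.ofReal_re]
    positivity

noncomputable def aff (k : ℕ) : ℝ → ℂ :=
  fun t => Vf k + ((t - (k:ℝ)) : ℂ) * (Vf (k+1) - Vf k)

lemma aff_cont (k : ℕ) : Continuous (aff k) := by
  apply Continuous.add continuous_const
  apply Continuous.mul _ continuous_const
  exact Continuous.sub Complex.continuous_ofReal continuous_const

lemma gam_eq_aff {k : ℕ} {t : ℝ} (h1 : (k:ℝ) ≤ t) (h2 : t ≤ (k:ℝ)+1) :
    gam t = aff k t := by
  rcases lt_or_eq_of_le h2 with h2' | h2'
  · have ht0 : (0:ℝ) ≤ t := le_trans (by positivity) h1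
    have hfl : ⌊t⌋₊ = k := by
      rw [Nat.floor_eq_iff ht0]
      exact ⟨h1, by push_cast; linarith⟩
    rw [gam, aff, hfl]
  · have : t = ((k+1 : ℕ):ℝ) := by push_cast; linarith
    rw [this, gam_nat, aff]
    push_cast
    ring_nf

lemma gam_contOn : ContinuousOn gam (Set.Ici 0) := by
  intro t ht
  simp only [Set.mem_Ici] at ht
  set k := ⌊t⌋₊ with hk
  have hk1 : (k:ℝ) ≤ t := Nat.floor_le ht
  have hk2 : t < (k:ℝ)+1 := by
    have := Nat.lt_floor_add_one t; push_cast at this ⊢; linarith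
  rcases lt_or_eq_of_le hk1 with hlt | heq
  · apply ContinuousAt.continuousWithinAt
    apply ((aff_cont k).continuousAt).congr
    apply Filter.eventuallyEq_of_mem (Ioo_mem_nhds hlt hk2)
    intro y hy
    exact (gam_eq_aff (le_of_lt hy.1) (le_of_lt hy.2)).symm
  · rcases Nat.eq_zero_or_pos k with hk0 | hk0
    · -- t = 0
      have ht0 : t = 0 := by rw [← heq, hk0]; norm_num
      have hmem : Set.Ici (0:ℝ) ∩ Set.Iio 1 ∈ 𝓝[Set.Ici 0] t :=
        inter_mem_nhdsWithin _ (Iio_mem_nhds (by rw [ht0]; norm_num))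
      apply ContinuousWithinAt.congr_of_eventuallyEq
        ((aff_cont 0).continuousWithinAt)
      · apply Filter.eventuallyEq_of_mem hmem
        intro y hy
        have h1 : (0:ℝ) ≤ y := hy.1
        have h2 : y < 1 := hy.2
        exact gam_eq_aff (k:=0) (t:=y) (by push_cast; linarith) (by push_cast; linarith)
      · exact gam_eq_aff (k:=0) (t:=t) (by rw [ht0]; push_cast; linarith)
          (by rw [ht0]; push_cast; linarith)
    · obtain ⟨j, hj⟩ : ∃ j, k = j+1 := ⟨k-1, by omega⟩
      rw [hj] at heq
      apply ContinuousAt.continuousWithinAt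
      rw [continuousAt_iff_continuous_left_right]
      constructor
      · -- left, aff j
        apply ContinuousWithinAt.congr_of_eventuallyEq
          ((aff_cont j).continuousWithinAt)
        · have hmem : Set.Iic t ∩ Set.Ioi ((j:ℝ)) ∈ 𝓝[Set.Iic t] t := by
            apply inter_mem_nhdsWithin
            apply Ioi_mem_nhds
            rw [← heq]; push_cast; linarith
          apply Filter.eventuallyEq_of_mem hmem
          intro y hy
          apply gam_eq_aff (le_of_lt hy.2)
          have := hy.1
          simp only [Set.mem_Iic] at this
          rw [← heq] at this; push_cast at this ⊢; linarith
        · apply gam_eq_aff <;> rw [← heq] <;> push_cast <;> linarith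
      · -- right, aff (j+1)
        apply ContinuousWithinAt.congr_of_eventuallyEq
          ((aff_cont (j+1)).continuousWithinAt)
        · have hmem : Set.Ici t ∩ Set.Iio (((j+1):ℝ)+1) ∈ 𝓝[Set.Ici t] t := by
            apply inter_mem_nhdsWithin
            apply Iio_mem_nhds
            rw [← heq]; push_cast; linarith
          apply Filter.eventuallyEq_of_mem hmem
          intro y hy
          apply gam_eq_aff
          · have := hy.1
            simp only [Set.mem_Ici] at this
            rw [← heq] at this; push_cast at this ⊢; linarith
          · have := hy.2
            simp only [Set.mem_Iio] at this
            push_cast at this ⊢; linarith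
        · apply gam_eq_aff <;> rw [← heq] <;> push_cast <;> linarith

lemma Qr_ge_n (n : ℕ) : (n:ℝ) ≤ Qr n := by
  rcases Nat.eq_zero_or_pos n with h | h
  · simp [h, Qr_zero]
  · have := Qr_lb h
    have : (1:ℝ) ≤ n := by exact_mod_cast h
    linarith [Qr_lb h]

lemma gam_tendsto_abs : Tendsto (fun t : ℝ => ‖gam t‖) atTop atTop := by
  rw [tendsto_atTop_atTop]
  intro b
  obtain ⟨n, hn⟩ := exists_nat_gt b
  refine ⟨((4*n : ℕ):ℝ), fun t htt => ?_⟩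
  have ht0 : (0:ℝ) ≤ t := le_trans (by positivity) htt
  have hfl : 4*n ≤ ⌊t⌋₊ := Nat.le_floor htt
  have h1 : Uf (4*n) ≤ Uf ⌊t⌋₊ := Uf_mono hfl
  rw [Uf_eval0] at h1
  have h2 := (gam_re_bounds ht0).1
  have h3 := Qr_ge_n n
  calc b ≤ (gam t).re := by linarith
    _ ≤ ‖gam t‖ := Complex.re_le_norm _


lemma Lr_le_Qr {q : ℕ} (hq : 1 ≤ q) : Lr q ≤ Qr q := by
  have := Lr_ub hq
  have := Qr_lb hq
  linarith

lemma QT_bound {q : ℕ} (hq : 1 ≤ q) : (q:ℝ) * (Qr q * Tr q) ≤ 3 * Lr q := by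
  have hq1 : (1:ℝ) ≤ q := by exact_mod_cast hq
  have ha : (2:ℝ) ≤ 3*(q:ℝ)-1 := a_pos hq
  have h2a : (0:ℝ) < 2*(3*(q:ℝ)-1) := by linarith
  have hQT : Qr q * Tr q * (2*(3*(q:ℝ)-1)) = (Qr q)^2 - (3*(q:ℝ)-1)^2 := by
    have := Tr_spec hq
    nlinarith [this]
  have hQub := Qr_ub hq
  have hQlb := Qr_lb hq
  have hLlb := Lr_lb hq
  have hQa1 : Qr q - (3*(q:ℝ)-1) ≤ 4/3 := by linarith
  have hQa0 : 0 ≤ Qr q - (3*(q:ℝ)-1) := by linarith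
  have hQa2 : Qr q + (3*(q:ℝ)-1) ≤ 6*(q:ℝ) - 2/3 := by linarith
  have hprod : (Qr q - (3*(q:ℝ)-1))*(Qr q + (3*(q:ℝ)-1)) ≤ (4/3)*(6*(q:ℝ) - 2/3) :=
    mul_le_mul hQa1 hQa2 (by linarith) (by norm_num)
  have key : (q:ℝ) * ((Qr q)^2 - (3*(q:ℝ)-1)^2) ≤ 3 * Lr q * (2*(3*(q:ℝ)-1)) := by
    nlinarith [mul_le_mul_of_nonneg_left hprod (by positivity : (0:ℝ) ≤ (q:ℝ)),
      mul_nonneg (by linarith : (0:ℝ) ≤ Lr q - (3*(q:ℝ)-2)) (by linarith : (0:ℝ) ≤ 3*(q:ℝ)-1),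
      sq_nonneg ((q:ℝ)-1)]
  have := mul_le_mul_of_nonneg_right (le_refl ((q:ℝ))) h2a.le
  nlinarith [key, hQT]

lemma ratio_bound {t : ℝ} (ht : 0 ≤ t) :
    (gam t).im * ((⌊t⌋₊/4 + 1 : ℕ):ℝ) ≤ 3 * (gam t).re := by
  set k := ⌊t⌋₊ with hk
  set q := k/4 with hq
  have hs0 : 0 ≤ t - (k:ℝ) := s_nonneg ht
  have hs1 : t - (k:ℝ) < 1 := s_lt_one t
  have hq1 : (1:ℝ) ≤ ((q+1 : ℕ):ℝ) := by exact_mod_cast Nat.one_le_iff_ne_zero.2 (by omega)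
  have hrepos := gam_re_pos ht
  have hTnn := Tr_nonneg (n := q+1) (by omega)
  have hLpos := Lr_pos (n := q+1) (by omega)
  have hLQ := Lr_le_Qr (q := q+1) (by omega)
  have hQpos := Qr_pos (q+1)
  have hQT := QT_bound (q := q+1) (by omega)
  push_cast at hQT
  -- v ≤ Qr (q+1) * Tr (q+1) unless k % 4 = 0 (in which case v = 0), and u ≥ Lr (q+1)
  have hvu : (gam t).im = 0 ∨
      ((gam t).im ≤ Qr (q+1) * Tr (q+1) ∧ Lr (q+1) ≤ (gam t).re) := by
    have h4 : k % 4 = 0 ∨ k % 4 = 1 ∨ k % 4 = 2 ∨ k % 4 = 3 := by omega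
    have hexp : k = 4*q + k%4 := by omega
    rcases h4 with h | h | h | h
    · left
      rw [gam_im, ← hk, show k = 4*q by omega, show 4*q+1 = 4*q+1 from rfl, Wf_eval0,
        show Wf (4*q+1) = 0 from Wf_eval1 q]
      ring
    · right
      have hw1 : Wf k = 0 := by rw [show k = 4*q+1 by omega]; exact Wf_eval1 q
      have hw2 : Wf (k+1) = Lr (q+1) * Tr (q+1) := by
        rw [show k+1 = 4*q+2 by omega]; exact Wf_eval2 q
      have hu1 : Uf k = Lr (q+1) := by rw [show k = 4*q+1 by omega]; exact Uf_eval1 q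
      constructor
      · rw [gam_im, ← hk, hw1, hw2]
        nlinarith [mul_nonneg hLpos.le hTnn, mul_le_mul_of_nonneg_right hLQ hTnn]
      · rw [gam_re, ← hk, hu1]
        have := Uf_succ k
        rw [hu1] at this
        nlinarith
    · right
      have hw1 : Wf k = Lr (q+1) * Tr (q+1) := by
        rw [show k = 4*q+2 by omega]; exact Wf_eval2 q
      have hw2 : Wf (k+1) = Qr (q+1) * Tr (q+1) := by
        rw [show k+1 = 4*q+3 by omega]; exact Wf_eval3 q
      have hu1 : Uf k = Lr (q+1) := by rw [show k = 4*q+2 by omega]; exact Uf_eval2 q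
      constructor
      · rw [gam_im, ← hk, hw1, hw2]
        nlinarith [mul_le_mul_of_nonneg_right hLQ hTnn]
      · rw [gam_re, ← hk, hu1]
        have := Uf_succ k
        rw [hu1] at this
        nlinarith
    · right
      have hw1 : Wf k = Qr (q+1) * Tr (q+1) := by
        rw [show k = 4*q+3 by omega]; exact Wf_eval3 q
      have hw2 : Wf (k+1) = 0 := by
        rw [show k+1 = 4*(q+1) by omega]; exact Wf_eval0 (q+1)
      have hu1 : Uf k = Qr (q+1) := by rw [show k = 4*q+3 by omega]; exact Uf_eval3 q
      constructor
      · rw [gam_im, ← hk, hw1, hw2]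
        nlinarith [mul_nonneg hQpos.le hTnn]
      · rw [gam_re, ← hk, hu1]
        have := Uf_succ k
        rw [hu1] at this
        nlinarith
  rcases hvu with h | ⟨h1, h2⟩
  · rw [h]
    nlinarith
  · have hqn : ((q + 1 : ℕ):ℝ) = (q:ℝ) + 1 := by push_cast; ring
    rw [hqn]
    nlinarith [mul_le_mul_of_nonneg_right h1 (by positivity : (0:ℝ) ≤ (q:ℝ)+1)]

lemma floor_div4_tendsto : Tendsto (fun t : ℝ => ((⌊t⌋₊/4 + 1 : ℕ):ℝ)) atTop atTop := by
  rw [tendsto_atTop_atTop]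
  intro b
  obtain ⟨n, hn⟩ := exists_nat_gt b
  refine ⟨((4*n:ℕ):ℝ), fun t htt => ?_⟩
  have h1 : 4*n ≤ ⌊t⌋₊ := Nat.le_floor htt
  have h2 : n ≤ ⌊t⌋₊/4 + 1 := by omega
  have : (n:ℝ) ≤ ((⌊t⌋₊/4 + 1 : ℕ):ℝ) := by exact_mod_cast h2
  linarith

lemma gam_tendsto_arg : Tendsto (fun t : ℝ => (gam t).arg) atTop (𝓝 0) := by
  have hratio : Tendsto (fun t : ℝ => (gam t).im / ‖gam t‖) atTop (𝓝 0) := by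
    apply squeeze_zero' (g := fun t : ℝ => 3 / ((⌊t⌋₊/4 + 1 : ℕ):ℝ))
    · filter_upwards [eventually_ge_atTop (0:ℝ)] with t ht
      exact div_nonneg (gam_im_nonneg ht) (norm_nonneg _)
    · filter_upwards [eventually_ge_atTop (0:ℝ)] with t ht
      have hre := gam_re_pos ht
      have habs : 0 < ‖gam t‖ :=
        norm_pos_iff.mpr (by intro h; rw [h] at hre; simp at hre)
      have hq1 : (0:ℝ) < ((⌊t⌋₊/4 + 1 : ℕ):ℝ) := by
        have : (1:ℕ) ≤ ⌊t⌋₊/4 + 1 := by omega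
        exact_mod_cast Nat.lt_of_lt_of_le Nat.zero_lt_one this
      have h1 : (gam t).im / ‖gam t‖ ≤ (gam t).im / (gam t).re :=
        div_le_div_of_nonneg_left (gam_im_nonneg ht) hre (Complex.re_le_norm _)
      have h2 : (gam t).im / (gam t).re ≤ 3 / ((⌊t⌋₊/4 + 1 : ℕ):ℝ) := by
        rw [div_le_div_iff₀ hre hq1]
        exact ratio_bound ht
      exact h1.trans h2
    · exact Tendsto.div_atTop tendsto_const_nhds floor_div4_tendsto
  have harg : ∀ᶠ t in atTop, Real.arcsin ((gam t).im / ‖gam t‖) = (gam t).arg := by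
    filter_upwards [eventually_ge_atTop (0:ℝ)] with t ht
    exact (Complex.arg_of_re_nonneg (gam_re_pos ht).le).symm
  have := (Real.continuous_arcsin.tendsto 0).comp hratio
  rw [Real.arcsin_zero] at this
  exact Tendsto.congr' harg this


/-- for the parabolic map f(z) = z + 1 there is a continuous curve
γ landing at ∞ with arg γ(t) → 0 and projections π_n of f^n(1) onto γ with
π_{3n−2} = π_{3n−1} for all n ≥ 1; in particular {d_ℍ(1, π_n)} is not eventually
strictly increasing. -/
theorem stmt17 (f : ℂ → ℂ) (hf : f = fun z : ℂ => z + 1) :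
    ∃ γ : ℝ → ℂ, ContinuousOn γ (Set.Ici 0) ∧ (∀ t ≥ (0:ℝ), 0 < (γ t).re) ∧
      Tendsto (fun t : ℝ => ‖γ t‖) atTop atTop ∧
      Tendsto (fun t : ℝ => (γ t).arg) atTop (𝓝 0) ∧
      ∃ p : ℕ → ℂ, (∀ n : ℕ, IsProjH γ (f^[n] 1) (p n)) ∧
        (∀ n : ℕ, 1 ≤ n → p (3*n - 2) = p (3*n - 1)) ∧
        ¬ (∃ N : ℕ, ∀ n ≥ N, dH 1 (p n) < dH 1 (p (n+1))) := by
  have hit : ∀ m : ℕ, f^[m] 1 = (((1:ℝ) + m : ℝ) : ℂ) := by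
    intro m
    induction m with
    | zero => simp
    | succ i ih => rw [Function.iterate_succ_apply', ih, hf]; push_cast; ring
  refine ⟨gam, gam_contOn, fun t ht => gam_re_pos ht, gam_tendsto_abs, gam_tendsto_arg, ?_⟩
  set p : ℕ → ℂ := fun m =>
    if m % 3 = 0 then (((m:ℝ) + 1 : ℝ) : ℂ) else ((Qr ((m+2)/3) : ℝ) : ℂ) with hp
  have hpe : ∀ n : ℕ, 1 ≤ n → p (3*n - 2) = p (3*n - 1) := by
    intro n hn
    have h1 : (3*n-2) % 3 ≠ 0 := by omega
    have h2 : (3*n-1) % 3 ≠ 0 := by omega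
    have h3 : (3*n-2+2)/3 = n := by omega
    have h4 : (3*n-1+2)/3 = n := by omega
    rw [hp]
    simp only [if_neg h1, if_neg h2, h3, h4]
  refine ⟨p, ?_, hpe, ?_⟩
  · intro m
    rw [hit m]
    simp only [hp]
    by_cases h : m % 3 = 0
    · rw [if_pos h]
      obtain ⟨r, rfl⟩ : ∃ r, m = 3*r := ⟨m/3, by omega⟩
      have hco : (((1:ℝ) + (3*r:ℕ) : ℝ) : ℂ) = ((3*(r:ℝ)+1 : ℝ) : ℂ) := by push_cast; ring
      have hco2 : ((((3*r:ℕ):ℝ) + 1 : ℝ) : ℂ) = ((3*(r:ℝ)+1 : ℝ) : ℂ) := by push_cast; ring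
      rw [hco, hco2]
      exact proj_triv r
    · rw [if_neg h]
      set n := (m+2)/3 with hn
      have hn1 : 1 ≤ n := by omega
      have hc : m+2 = 3*n ∨ m+1 = 3*n := by omega
      have hx1 : 3*(n:ℝ) - 1 ≤ 1 + (m:ℕ) := by
        rcases hc with hc | hc
        · have : ((m:ℕ):ℝ) + 2 = 3*(n:ℝ) := by exact_mod_cast congrArg (Nat.cast : ℕ → ℝ) hc
          linarith
        · have : ((m:ℕ):ℝ) + 1 = 3*(n:ℝ) := by exact_mod_cast congrArg (Nat.cast : ℕ → ℝ) hc
          linarith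
      have hx2 : (1:ℝ) + (m:ℕ) ≤ 3*(n:ℝ) := by
        rcases hc with hc | hc
        · have : ((m:ℕ):ℝ) + 2 = 3*(n:ℝ) := by exact_mod_cast congrArg (Nat.cast : ℕ → ℝ) hc
          linarith
        · have : ((m:ℕ):ℝ) + 1 = 3*(n:ℝ) := by exact_mod_cast congrArg (Nat.cast : ℕ → ℝ) hc
          linarith
      exact proj_main hn1 (by positivity) hx1 hx2
  · rintro ⟨N, hN⟩
    have h1 := hN (3*(N+1)-2) (by omega)
    have h2 : 3*(N+1)-2+1 = 3*(N+1)-1 := by omega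
    rw [h2, hpe (N+1) (by omega)] at h1
    exact lt_irrefl _ h1
end
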